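/- arXiv:1905.13730 — 7 statements merged into one kernel-verified Lean document; each statement's English description precedes it below -/
import Mathlib

section
/- For positive integers t ≥ 2 and d ≥ 1, ((t-1)·C(t+d, t) + C(t-1+d, t))·C(t-2+d, t-1) = t·C(t-1+d, t-1)·C(t-1+d, t). -/
theorem stmt_1 (t d : ℕ) (ht : 2 ≤ t) (hd : 1 ≤ d) :
    ((t - 1) * Nat.choose (t + d) t + Nat.choose (t - 1 + d) t) * Nat.choose (t - 2 + d) (t - 1)
      = t * Nat.choose (t - 1 + d) (t - 1) * Nat.choose (t - 1 + d) t := by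
  obtain ⟨s, rfl⟩ : ∃ s, t = s + 2 := ⟨t - 2, by omega⟩
  obtain ⟨e, rfl⟩ : ∃ e, d = e + 1 := ⟨d - 1, by omega⟩
  have e1 : s + 2 - 1 = s + 1 := rfl
  have e2 : s + 2 - 2 = s := rfl
  rw [e1, e2, show s + 2 + (e + 1) = (s + e + 2) + 1 from by ring,
    show s + 1 + (e + 1) = s + e + 2 from by ring,
    show s + (e + 1) = s + e + 1 from by ring]
  have pascal : Nat.choose (s + e + 2 + 1) (s + 2)
      = Nat.choose (s + e + 2) (s + 1) + Nat.choose (s + e + 2) (s + 2) :=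
    Nat.choose_succ_succ (s + e + 2) (s + 1)
  have h1 := Nat.choose_succ_right_eq (s + e + 2) (s + 1)
  have h2 := Nat.choose_mul_succ_eq (s + e + 1) (s + 1)
  rw [show s + e + 2 - (s + 1) = e + 1 from by omega] at h1
  rw [show s + e + 1 + 1 = s + e + 2 from by ring,
    show s + e + 2 - (s + 1) = e + 1 from by omega] at h2
  rw [pascal]
  zify at h1 h2 ⊢
  linear_combination ((Nat.choose (s + e + 1) (s + 1) : ℤ)
      - (Nat.choose (s + e + 2) (s + 1) : ℤ)) * h1
    + (Nat.choose (s + e + 2) (s + 1) : ℤ) * h2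
end

section
/- Let B be a finite nonempty set and M ⊆ ℕ^B an upper set. If U ∈ ℕ and μ_U(M) > 0, then μ_U(M) ≤ μ_{U+1}(M); moreover if 0 < μ_U(M) < 1 then μ_U(M) < μ_{U+1}(M), and lim_{i→∞} μ_i(M) = 1. Here μ_T is the uniform probability measure on functions f : B → ℕ with total sum T. -/
open Finset

/-- The uniform probability of the event `M` under the uniform distribution on
functions `f : B → ℕ` with `∑ b, f b = T`. -/
noncomputable def uniformProb (B : Type*) [Fintype B] (T : ℕ) (M : Set (B → ℕ)) : ℝ := by
  classical
  exact (((Fintype.piFinset fun _ : B => Finset.range (T + 1)).filter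
        (fun f => (∑ b, f b) = T ∧ f ∈ M)).card : ℝ) /
      (((Fintype.piFinset fun _ : B => Finset.range (T + 1)).filter
        (fun f => (∑ b, f b) = T)).card : ℝ)

section Aux
variable {B : Type*} [Fintype B] [DecidableEq B]

def Sf (B : Type*) [Fintype B] [DecidableEq B] (T : ℕ) : Finset (B → ℕ) :=
  (Fintype.piFinset fun _ : B => Finset.range (T + 1)).filter (fun f => (∑ b, f b) = T)

lemma mem_Sf {T : ℕ} {f : B → ℕ} : f ∈ Sf B T ↔ (∑ b, f b) = T := by
  constructor
  · intro hf; exact (Finset.mem_filter.mp hf).2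
  · intro hf
    refine Finset.mem_filter.mpr ⟨?_, hf⟩
    refine Fintype.mem_piFinset.mpr fun b => ?_
    rw [Finset.mem_range]
    have : f b ≤ ∑ b', f b' := Finset.single_le_sum (fun i _ => Nat.zero_le _) (Finset.mem_univ b)
    omega

lemma uniformProb_eq (T : ℕ) (M : Set (B → ℕ)) [DecidablePred (· ∈ M)] :
    uniformProb B T M
      = (((Sf B T).filter (· ∈ M)).card : ℝ) / ((Sf B T).card : ℝ) := by
  unfold uniformProb Sf
  rw [Finset.filter_filter]
  congr!

lemma sum_update_add (f : B → ℕ) (b : B) (v : ℕ) :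
    (∑ b', Function.update f b v b') + f b = (∑ b', f b') + v := by
  rw [Finset.sum_update_of_mem (Finset.mem_univ b),
      Finset.sum_eq_sum_sdiff_singleton_add (Finset.mem_univ b) f]
  ring

lemma innerSumAux (T : ℕ) (P : (B → ℕ) → Prop) [DecidablePred P] (b : B) :
    ∑ f ∈ (Sf B T).filter P, (f b + 1)
      = ∑ f' ∈ Sf B (T + 1), (if P (Function.update f' b (f' b - 1)) then f' b else 0) := by
  have hsub : (Sf B (T+1)).filter (fun f' => P (Function.update f' b (f' b - 1)) ∧ f' b ≠ 0)
      ⊆ (Sf B (T+1)).filter (fun f' => P (Function.update f' b (f' b - 1))) := by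
    intro x hx
    obtain ⟨h1, h2, _⟩ := Finset.mem_filter.mp hx
    exact Finset.mem_filter.mpr ⟨h1, h2⟩
  have hz : ∀ f' ∈ (Sf B (T+1)).filter (fun f' => P (Function.update f' b (f' b - 1))),
      f' ∉ (Sf B (T+1)).filter (fun f' => P (Function.update f' b (f' b - 1)) ∧ f' b ≠ 0) →
      f' b = 0 := by
    intro f' h1 h2
    obtain ⟨ha, hb⟩ := Finset.mem_filter.mp h1
    by_contra h
    exact h2 (Finset.mem_filter.mpr ⟨ha, hb, h⟩)
  rw [← Finset.sum_filter, ← Finset.sum_subset hsub hz]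
  apply Finset.sum_nbij' (i := fun f => Function.update f b (f b + 1))
    (j := fun f' => Function.update f' b (f' b - 1))
  · intro f hf
    obtain ⟨hfS, hfP⟩ := Finset.mem_filter.mp hf
    have hsum : (∑ b', f b') = T := mem_Sf.mp hfS
    have h1 : (∑ b', Function.update f b (f b + 1) b') = T + 1 := by
      have := sum_update_add f b (f b + 1); omega
    refine Finset.mem_filter.mpr ⟨mem_Sf.mpr h1, ?_, ?_⟩
    · have h2 : Function.update (Function.update f b (f b + 1)) b
          (Function.update f b (f b + 1) b - 1) = f := by
        simp [Function.update_idem]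
      rwa [h2]
    · simp
  · intro f' hf'
    obtain ⟨hf'S, hP, hne⟩ := Finset.mem_filter.mp hf'
    have hsum : (∑ b', f' b') = T + 1 := mem_Sf.mp hf'S
    have h1 : (∑ b', Function.update f' b (f' b - 1) b') = T := by
      have := sum_update_add f' b (f' b - 1); omega
    exact Finset.mem_filter.mpr ⟨mem_Sf.mpr h1, hP⟩
  · intro f hf
    simp [Function.update_idem]
  · intro f' hf'
    obtain ⟨hf'S, hP, hne⟩ := Finset.mem_filter.mp hf'
    have h1 : f' b - 1 + 1 = f' b := by omega
    simp [Function.update_idem, h1]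
  · intro f hf
    simp

lemma countKey (T : ℕ) (P : (B → ℕ) → Prop) [DecidablePred P] :
    (T + Fintype.card B) * ((Sf B T).filter P).card
      = ∑ f' ∈ Sf B (T + 1), ∑ b, (if P (Function.update f' b (f' b - 1)) then f' b else 0) := by
  have h1 : ∀ f ∈ (Sf B T).filter P, (∑ b, (f b + 1)) = T + Fintype.card B := by
    intro f hf
    have : (∑ b, f b) = T := mem_Sf.mp (Finset.mem_filter.mp hf).1
    rw [Finset.sum_add_distrib, this, Finset.sum_const, Finset.card_univ, smul_eq_mul, mul_one]
  calc (T + Fintype.card B) * ((Sf B T).filter P).card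
      = ∑ f ∈ (Sf B T).filter P, (∑ b, (f b + 1)) := by
        rw [Finset.sum_congr rfl h1, Finset.sum_const, smul_eq_mul, mul_comm]
    _ = ∑ b, ∑ f ∈ (Sf B T).filter P, (f b + 1) := Finset.sum_comm
    _ = ∑ b, ∑ f' ∈ Sf B (T + 1), (if P (Function.update f' b (f' b - 1)) then f' b else 0) :=
        Finset.sum_congr rfl (fun b _ => innerSumAux T P b)
    _ = _ := Finset.sum_comm

lemma nRec (T : ℕ) :
    (T + Fintype.card B) * (Sf B T).card = (T + 1) * (Sf B (T + 1)).card := by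
  have h := countKey (B := B) T (fun _ => True)
  simp only [if_true, Finset.filter_true] at h
  rw [h]
  rw [Finset.sum_congr rfl (fun f' hf' => mem_Sf.mp hf')]
  rw [Finset.sum_const, smul_eq_mul, mul_comm]

lemma update_le (f : B → ℕ) (b : B) : Function.update f b (f b - 1) ≤ f := by
  intro b'
  by_cases hb : b' = b
  · subst hb; simp
  · simp [Function.update_of_ne hb]

variable (M : Set (B → ℕ))

lemma rhsRestrict (hM : ∀ x ∈ M, ∀ y : B → ℕ, x ≤ y → y ∈ M) (T : ℕ)
    [DecidablePred (· ∈ M)] :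
    ∑ f' ∈ Sf B (T + 1), ∑ b, (if Function.update f' b (f' b - 1) ∈ M then f' b else 0)
      = ∑ f' ∈ (Sf B (T + 1)).filter (· ∈ M),
          ∑ b, (if Function.update f' b (f' b - 1) ∈ M then f' b else 0) := by
  symm
  apply Finset.sum_subset (Finset.filter_subset _ _)
  intro f' hf' hnot
  have hfM : f' ∉ M := fun h => hnot (Finset.mem_filter.mpr ⟨hf', h⟩)
  apply Finset.sum_eq_zero
  intro b _
  by_cases h : Function.update f' b (f' b - 1) ∈ M
  · rw [if_pos h]
    by_contra hne
    exact hfM (hM _ h f' (update_le f' b))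
  · rw [if_neg h]

lemma aMono (hM : ∀ x ∈ M, ∀ y : B → ℕ, x ≤ y → y ∈ M) (T : ℕ)
    [DecidablePred (· ∈ M)] :
    (T + Fintype.card B) * ((Sf B T).filter (· ∈ M)).card
      ≤ (T + 1) * ((Sf B (T + 1)).filter (· ∈ M)).card := by
  rw [countKey T (· ∈ M), rhsRestrict M hM T, mul_comm]
  apply Finset.sum_le_card_nsmul
  intro f' hf'
  have hsum : (∑ b, f' b) = T + 1 :=
    mem_Sf.mp (Finset.mem_filter.mp hf').1
  calc (∑ b, (if Function.update f' b (f' b - 1) ∈ M then f' b else 0))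
      ≤ ∑ b, f' b := Finset.sum_le_sum (fun b _ => by split <;> omega)
    _ = T + 1 := hsum

lemma aStrict (hM : ∀ x ∈ M, ∀ y : B → ℕ, x ≤ y → y ∈ M) (T : ℕ)
    [DecidablePred (· ∈ M)]
    (f₀ : B → ℕ) (hf₀ : f₀ ∈ M) (hf₀s : (∑ b, f₀ b) = T + 1)
    (a : B) (ha : f₀ a ≠ 0) (hd : Function.update f₀ a (f₀ a - 1) ∉ M) :
    (T + Fintype.card B) * ((Sf B T).filter (· ∈ M)).card
      < (T + 1) * ((Sf B (T + 1)).filter (· ∈ M)).card := by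
  rw [countKey T (· ∈ M), rhsRestrict M hM T]
  have hmem : f₀ ∈ (Sf B (T + 1)).filter (· ∈ M) :=
    Finset.mem_filter.mpr ⟨mem_Sf.mpr hf₀s, hf₀⟩
  have hlt : (∑ b, (if Function.update f₀ b (f₀ b - 1) ∈ M then f₀ b else 0)) < T + 1 := by
    have : (∑ b, (if Function.update f₀ b (f₀ b - 1) ∈ M then f₀ b else 0)) < ∑ b, f₀ b := by
      apply Finset.sum_lt_sum (fun b _ => by split <;> omega)
      exact ⟨a, Finset.mem_univ a, by rw [if_neg hd]; omega⟩
    omega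
  calc ∑ f' ∈ (Sf B (T + 1)).filter (· ∈ M),
          ∑ b, (if Function.update f' b (f' b - 1) ∈ M then f' b else 0)
      < ∑ f' ∈ (Sf B (T + 1)).filter (· ∈ M), (T + 1) := by
        apply Finset.sum_lt_sum _ ⟨f₀, hmem, hlt⟩
        intro f' hf'
        have hsum : (∑ b, f' b) = T + 1 := mem_Sf.mp (Finset.mem_filter.mp hf').1
        calc (∑ b, (if Function.update f' b (f' b - 1) ∈ M then f' b else 0))
            ≤ ∑ b, f' b := Finset.sum_le_sum (fun b _ => by split <;> omega)
          _ = T + 1 := hsum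
    _ = (T + 1) * ((Sf B (T + 1)).filter (· ∈ M)).card := by
        rw [Finset.sum_const, smul_eq_mul, mul_comm]

lemma existsWitness (hM : ∀ x ∈ M, ∀ y : B → ℕ, x ≤ y → y ∈ M) (U : ℕ) :
    ∀ d : ℕ, ∀ h g : B → ℕ, (∑ b, (h b - g b)) = d → h ∈ M → g ∉ M →
      (∑ b, h b) = U → (∑ b, g b) = U →
      ∃ f', f' ∈ M ∧ (∑ b, f' b) = U + 1 ∧
        ∃ a, f' a ≠ 0 ∧ Function.update f' a (f' a - 1) ∉ M := by
  intro d
  induction d using Nat.strong_induction_on with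
  | _ d IH =>
    intro h g hd hhM hgM hhU hgU
    have ha : ∃ a, g a < h a := by
      by_contra hcon; push_neg at hcon
      exact hgM (hM h hhM g hcon)
    obtain ⟨a, ha⟩ := ha
    have hc : ∃ c, h c < g c := by
      by_contra hcon; push_neg at hcon
      have : (∑ b, g b) < ∑ b, h b :=
        Finset.sum_lt_sum (fun i _ => hcon i) ⟨a, Finset.mem_univ a, ha⟩
      omega
    obtain ⟨c, hc⟩ := hc
    have hac : a ≠ c := by intro e; subst e; omega
    have hf'le : h ≤ Function.update h c (h c + 1) := by
      intro b'
      by_cases hb : b' = c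
      · subst hb; simp
      · simp [Function.update_of_ne hb]
    have hf'M : Function.update h c (h c + 1) ∈ M := hM h hhM _ hf'le
    have hf'sum : (∑ b, Function.update h c (h c + 1) b) = U + 1 := by
      have := sum_update_add h c (h c + 1); omega
    have hf'a : Function.update h c (h c + 1) a = h a := Function.update_of_ne hac _ _
    have hf'ane : Function.update h c (h c + 1) a ≠ 0 := by omega
    by_cases hm : Function.update (Function.update h c (h c + 1)) a
        (Function.update h c (h c + 1) a - 1) ∈ M
    · -- recurse with h₂
      set h₂ := Function.update (Function.update h c (h c + 1)) a
        (Function.update h c (h c + 1) a - 1) with hh₂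
      have hval : ∀ b, h₂ b = if b = a then h a - 1 else if b = c then h c + 1 else h b := by
        intro b
        by_cases hb : b = a
        · rw [if_pos hb]; subst hb; rw [hh₂, Function.update_self, hf'a]
        · rw [if_neg hb, hh₂, Function.update_of_ne hb]
          by_cases hbc : b = c
          · rw [if_pos hbc]; subst hbc; rw [Function.update_self]
          · rw [if_neg hbc, Function.update_of_ne hbc]
      have hh₂sum : (∑ b, h₂ b) = U := by
        have h1 := sum_update_add (Function.update h c (h c + 1)) a
          (Function.update h c (h c + 1) a - 1)
        rw [← hh₂] at h1
        omega
      have hlt : (∑ b, (h₂ b - g b)) < d := by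
        subst hd
        apply Finset.sum_lt_sum
        · intro b _
          rw [hval b]
          by_cases hb : b = a
          · rw [if_pos hb]; subst hb; omega
          · rw [if_neg hb]
            by_cases hbc : b = c
            · rw [if_pos hbc]; subst hbc; omega
            · rw [if_neg hbc]
        · refine ⟨a, Finset.mem_univ a, ?_⟩
          rw [hval a, if_pos rfl]
          omega
      exact IH _ hlt h₂ g rfl hm hgM hh₂sum hgU
    · exact ⟨Function.update h c (h c + 1), hf'M, hf'sum, a, hf'ane, hm⟩

lemma nPos [Nonempty B] (T : ℕ) : 0 < (Sf B T).card := by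
  refine Finset.card_pos.mpr ⟨fun b => if b = Classical.arbitrary B then T else 0, ?_⟩
  rw [mem_Sf]
  simp [Finset.sum_ite_eq']

lemma aLower (hM : ∀ x ∈ M, ∀ y : B → ℕ, x ≤ y → y ∈ M) [DecidablePred (· ∈ M)]
    (m : B → ℕ) (hm : m ∈ M) (U : ℕ) (hmU : (∑ b, m b) = U)
    (T : ℕ) (hT : U ≤ T) :
    (Sf B (T - U)).card ≤ ((Sf B T).filter (· ∈ M)).card := by
  apply Finset.card_le_card_of_injOn (fun g => m + g)
  · intro g hg
    have hgs : (∑ b, g b) = T - U := mem_Sf.mp hg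
    refine Finset.mem_filter.mpr ⟨mem_Sf.mpr ?_, ?_⟩
    · have : (∑ b, (m + g) b) = (∑ b, m b) + (∑ b, g b) := by
        simp [Finset.sum_add_distrib]
      beta_reduce
      omega
    · exact hM m hm _ (fun b => Nat.le_add_right _ _)
  · intro g1 _ g2 _ he
    funext b
    have := congrFun he b
    simpa using this

lemma nRatio (n : ℕ) (hn : Fintype.card B = n) :
    ∀ U k : ℕ, (Sf B (k + U)).card * (k + 1) ^ U ≤ (Sf B k).card * (k + U + n) ^ U := by
  intro U
  induction U with
  | zero => intro k; simp
  | succ U IH =>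
    intro k
    have h1 : (Sf B (k + (U + 1))).card * (k + 2) ^ U ≤ (Sf B (k + 1)).card * (k + 1 + U + n) ^ U := by
      have h0 := IH (k + 1)
      have he : k + 1 + U = k + (U + 1) := by ring
      rw [he] at h0
      calc (Sf B (k + (U + 1))).card * (k + 2) ^ U
          = (Sf B (k + (U + 1))).card * (k + 1 + 1) ^ U := by norm_num
        _ ≤ (Sf B (k + 1)).card * (k + (U + 1) + n) ^ U := h0
        _ = (Sf B (k + 1)).card * (k + 1 + U + n) ^ U := by ring_nf
    have hrec : (k + n) * (Sf B k).card = (k + 1) * (Sf B (k + 1)).card := by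
      rw [← hn]; exact nRec k
    calc (Sf B (k + (U + 1))).card * (k + 1) ^ (U + 1)
        = ((Sf B (k + (U + 1))).card * (k + 1) ^ U) * (k + 1) := by ring
      _ ≤ ((Sf B (k + (U + 1))).card * (k + 2) ^ U) * (k + 1) := by
          apply Nat.mul_le_mul_right
          apply Nat.mul_le_mul_left
          exact Nat.pow_le_pow_left (by omega) U
      _ ≤ ((Sf B (k + 1)).card * (k + 1 + U + n) ^ U) * (k + 1) := Nat.mul_le_mul_right _ h1
      _ = (k + 1 + U + n) ^ U * ((k + 1) * (Sf B (k + 1)).card) := by ring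
      _ = (k + 1 + U + n) ^ U * ((k + n) * (Sf B k).card) := by rw [hrec]
      _ ≤ (k + (U + 1) + n) ^ U * ((k + (U + 1) + n) * (Sf B k).card) := by
          apply Nat.mul_le_mul
          · exact Nat.pow_le_pow_left (by omega) U
          · exact Nat.mul_le_mul_right _ (by omega)
      _ = (Sf B k).card * (k + (U + 1) + n) ^ (U + 1) := by ring

end Aux

theorem stmt_4 (B : Type*) [Fintype B] [Nonempty B] (M : Set (B → ℕ))
    (hM : ∀ x ∈ M, ∀ y : B → ℕ, x ≤ y → y ∈ M)
    (U : ℕ) (hU : 0 < uniformProb B U M) :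
    uniformProb B U M ≤ uniformProb B (U + 1) M ∧
    (uniformProb B U M < 1 → uniformProb B U M < uniformProb B (U + 1) M) ∧
    Filter.Tendsto (fun i => uniformProb B i M) Filter.atTop (nhds 1) := by
  classical
  have hn : 0 < Fintype.card B := Fintype.card_pos
  set n := Fintype.card B with hndef
  have hμ : ∀ T, uniformProb B T M
      = ((((Sf B T).filter (· ∈ M)).card : ℝ)) / ((Sf B T).card : ℝ) :=
    fun T => uniformProb_eq T M
  have hNpos : ∀ T, (0:ℝ) < ((Sf B T).card : ℝ) := fun T => by
    exact_mod_cast nPos (B := B) T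
  have hAUpos : 0 < ((Sf B U).filter (· ∈ M)).card := by
    by_contra h
    have h0 : ((Sf B U).filter (· ∈ M)).card = 0 := by omega
    rw [hμ U, h0] at hU
    norm_num at hU
  obtain ⟨m, hm⟩ := Finset.card_pos.mp hAUpos
  obtain ⟨hmS, hmM⟩ := Finset.mem_filter.mp hm
  have hmU : (∑ b, m b) = U := mem_Sf.mp hmS
  -- Part 1
  have key1 : (((Sf B U).filter (· ∈ M)).card) * ((Sf B (U+1)).card)
      ≤ (((Sf B (U+1)).filter (· ∈ M)).card) * ((Sf B U).card) := by
    have h1 := aMono M hM U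
    have h2 := nRec (B := B) U
    apply Nat.le_of_mul_le_mul_left _ (show 0 < U + 1 by omega)
    calc (U+1) * ((((Sf B U).filter (· ∈ M)).card) * ((Sf B (U+1)).card))
        = (((Sf B U).filter (· ∈ M)).card) * ((U+1) * (Sf B (U+1)).card) := by ring
      _ = (((Sf B U).filter (· ∈ M)).card) * ((U+n) * (Sf B U).card) := by rw [← h2]
      _ = ((U + n) * (((Sf B U).filter (· ∈ M)).card)) * ((Sf B U).card) := by ring
      _ ≤ ((U+1) * (((Sf B (U+1)).filter (· ∈ M)).card)) * ((Sf B U).card) :=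
          Nat.mul_le_mul_right _ h1
      _ = (U+1) * ((((Sf B (U+1)).filter (· ∈ M)).card) * ((Sf B U).card)) := by ring
  have part1 : uniformProb B U M ≤ uniformProb B (U + 1) M := by
    rw [hμ U, hμ (U+1), div_le_div_iff₀ (hNpos U) (hNpos (U+1))]
    exact_mod_cast key1
  -- Part 2
  have part2 : uniformProb B U M < 1 → uniformProb B U M < uniformProb B (U + 1) M := by
    intro hlt
    have hAN : ((Sf B U).filter (· ∈ M)).card < (Sf B U).card := by
      rw [hμ U, div_lt_one (hNpos U)] at hlt
      exact_mod_cast hlt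
    have hg : ∃ g ∈ Sf B U, g ∉ M := by
      by_contra hcon
      push_neg at hcon
      have : Sf B U ⊆ (Sf B U).filter (· ∈ M) := fun x hx =>
        Finset.mem_filter.mpr ⟨hx, hcon x hx⟩
      have := Finset.card_le_card this
      omega
    obtain ⟨g, hgS, hgM⟩ := hg
    have hgU : (∑ b, g b) = U := mem_Sf.mp hgS
    obtain ⟨f', hf'M, hf'sum, a, ha, hd⟩ :=
      existsWitness M hM U (∑ b, (m b - g b)) m g rfl hmM hgM hmU hgU
    have h1 := aStrict M hM U f' hf'M hf'sum a ha hd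
    have h2 := nRec (B := B) U
    have key2 : (((Sf B U).filter (· ∈ M)).card) * ((Sf B (U+1)).card)
        < (((Sf B (U+1)).filter (· ∈ M)).card) * ((Sf B U).card) := by
      apply Nat.lt_of_mul_lt_mul_left (a := U + 1)
      calc (U+1) * ((((Sf B U).filter (· ∈ M)).card) * ((Sf B (U+1)).card))
          = (((Sf B U).filter (· ∈ M)).card) * ((U+1) * (Sf B (U+1)).card) := by ring
        _ = (((Sf B U).filter (· ∈ M)).card) * ((U+n) * (Sf B U).card) := by rw [← h2]
        _ = ((U + n) * (((Sf B U).filter (· ∈ M)).card)) * ((Sf B U).card) := by ring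
        _ < ((U+1) * (((Sf B (U+1)).filter (· ∈ M)).card)) * ((Sf B U).card) := by
            apply Nat.mul_lt_mul_of_lt_of_le h1 (le_refl _)
            exact nPos (B := B) U
        _ = (U+1) * ((((Sf B (U+1)).filter (· ∈ M)).card) * ((Sf B U).card)) := by ring
    rw [hμ U, hμ (U+1), div_lt_div_iff₀ (hNpos U) (hNpos (U+1))]
    exact_mod_cast key2
  refine ⟨part1, part2, ?_⟩
  -- Part 3 : tendsto
  have hupper : ∀ T, uniformProb B T M ≤ 1 := by
    intro T
    rw [hμ T, div_le_one (hNpos T)]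
    exact_mod_cast Finset.card_le_card (Finset.filter_subset _ _)
  have hlow : ∀ T, U ≤ T →
      (((T - U + 1 : ℕ) : ℝ) / ((T + n : ℕ) : ℝ)) ^ U ≤ uniformProb B T M := by
    intro T hT
    have he : T - U + U = T := by omega
    have h2 := aLower M hM m hmM U hmU T hT
    have h3 : (Sf B T).card * (T - U + 1) ^ U
        ≤ (((Sf B T).filter (· ∈ M)).card) * (T + n) ^ U := by
      have h1 := nRatio (B := B) n rfl U (T - U)
      rw [he] at h1
      exact le_trans h1 (Nat.mul_le_mul_right _ h2)
    rw [hμ T, div_pow, div_le_div_iff₀ (by positivity) (hNpos T), mul_comm]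
    exact_mod_cast h3
  have hL : Filter.Tendsto (fun T : ℕ => (((T - U + 1 : ℕ) : ℝ) / ((T + n : ℕ) : ℝ)) ^ U)
      Filter.atTop (nhds 1) := by
    have hx : Filter.Tendsto (fun T : ℕ => (T:ℝ) + n) Filter.atTop Filter.atTop :=
      Filter.tendsto_atTop_add_const_right _ _ tendsto_natCast_atTop_atTop
    have h0 : Filter.Tendsto (fun T : ℕ => (1 - (U:ℝ) - n)/((T:ℝ)+n)) Filter.atTop (nhds 0) :=
      Filter.Tendsto.div_atTop tendsto_const_nhds hx
    have h1 : Filter.Tendsto (fun T : ℕ => 1 + (1 - (U:ℝ) - n)/((T:ℝ)+n)) Filter.atTop (nhds 1) := by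
      simpa using (tendsto_const_nhds :
        Filter.Tendsto (fun _ : ℕ => (1:ℝ)) Filter.atTop (nhds 1)).add h0
    have h2 : Filter.Tendsto (fun T : ℕ => ((T - U + 1 : ℕ) : ℝ) / ((T + n : ℕ) : ℝ))
        Filter.atTop (nhds 1) := by
      apply Filter.Tendsto.congr' _ h1
      filter_upwards [Filter.eventually_atTop.mpr ⟨U, fun T hT => hT⟩] with T hT
      have hTn : (T:ℝ) + n ≠ 0 := by positivity
      have hc1 : ((T - U + 1 : ℕ) : ℝ) = (T:ℝ) - U + 1 := by
        push_cast [hT]; ring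
      have hc2 : ((T + n : ℕ) : ℝ) = (T:ℝ) + n := by push_cast; ring
      rw [hc1, hc2]
      field_simp
      ring
    have := h2.pow U
    simpa using this
  apply tendsto_of_tendsto_of_tendsto_of_le_of_le' hL tendsto_const_nhds
  · filter_upwards [Filter.eventually_atTop.mpr ⟨U, fun T hT => hT⟩] with T hT
    exact hlow T hT
  · filter_upwards with T
    exact hupper T
end

section
/- Let B be a finite nonempty set and M ⊆ ℕ^B an upper set with M ≠ ∅ and M ≠ ℕ^B. Then the function x ↦ ν_x(M) on [0,∞) is strictly increasing and continuous, satisfies ν_0(M) = 0, and tends to 1 as x → ∞. Here ν_x is the product of |B| copies of the geometric distribution on ℕ with parameter (1 + x/|B|)^{-1}. -/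
open Filter Topology

/-- `geomProdProb B x M` is `ν_x(M)`: the probability of `M ⊆ ℕ^B` under the product of
`|B|` copies of the geometric distribution on `ℕ` with parameter `(1 + x/|B|)⁻¹`. -/
noncomputable def geomProdProb (B : Type*) [Fintype B] (x : ℝ) (M : Set (B → ℕ)) : ℝ :=
  ∑' f : M, ∏ b : B,
    (1 + x / Fintype.card B)⁻¹ * (1 - (1 + x / Fintype.card B)⁻¹) ^ (f : B → ℕ) b

namespace GeomAux

noncomputable def w (n : ℕ) (q : ℝ) (f : Fin n → ℕ) : ℝ := ∏ i, (1 - q) * q ^ f i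

noncomputable def nu (n : ℕ) (q : ℝ) (M : Set (Fin n → ℕ)) : ℝ := ∑' f : M, w n q f

variable {n : ℕ} {q q1 q2 : ℝ}

lemma w_nonneg (h0 : 0 ≤ q) (h1 : q ≤ 1) (f : Fin n → ℕ) : 0 ≤ w n q f :=
  Finset.prod_nonneg fun _ _ => mul_nonneg (by linarith) (pow_nonneg h0 _)

lemma w_cons (k : ℕ) (f : Fin n → ℕ) :
    w (n + 1) q (Fin.cons k f) = ((1 - q) * q ^ k) * w n q f := by
  rw [w, Fin.prod_univ_succ]
  simp [w]

lemma summable_w (h0 : 0 ≤ q) (h1 : q < 1) : ∀ n, Summable (w n q) := by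
  intro n
  induction n with
  | zero => exact Summable.of_finite
  | succ n ih =>
    have hgeo : Summable fun k : ℕ => (1 - q) * q ^ k :=
      (summable_geometric_of_lt_one h0 h1).mul_left _
    have h : Summable (fun p : ℕ × (Fin n → ℕ) => ((1 - q) * q ^ p.1) * w n q p.2) :=
      hgeo.mul_of_nonneg ih
        (fun k => mul_nonneg (by linarith) (pow_nonneg h0 _))
        (fun f => w_nonneg h0 h1.le f)
    have := (Fin.consEquiv (fun _ : Fin (n + 1) => ℕ)).summable_iff
      (f := w (n + 1) q)
    rw [← this]
    refine h.congr fun p => ?_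
    simp [Fin.consEquiv, w_cons]

lemma tsum_w (h0 : 0 ≤ q) (h1 : q < 1) : ∀ n, ∑' f, w n q f = 1 := by
  intro n
  induction n with
  | zero =>
    rw [tsum_eq_single (0 : Fin 0 → ℕ) (fun b hb => absurd (Subsingleton.elim b 0) hb)]
    simp [w]
  | succ n ih =>
    have hE := (Fin.consEquiv (fun _ : Fin (n + 1) => ℕ)).tsum_eq (w (n + 1) q)
    rw [← hE]
    have hterm : ∀ p : ℕ × (Fin n → ℕ),
        w (n + 1) q ((Fin.consEquiv (fun _ : Fin (n + 1) => ℕ)) p)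
          = ((1 - q) * q ^ p.1) * w n q p.2 := by
      intro p; simp [Fin.consEquiv, w_cons]
    rw [tsum_congr hterm]
    have hsum : Summable (fun p : ℕ × (Fin n → ℕ) => ((1 - q) * q ^ p.1) * w n q p.2) :=
      ((summable_geometric_of_lt_one h0 h1).mul_left _).mul_of_nonneg (summable_w h0 h1 n)
        (fun k => mul_nonneg (by linarith) (pow_nonneg h0 _))
        (fun f => w_nonneg h0 h1.le f)
    rw [Summable.tsum_prod' hsum (fun k => (((summable_w h0 h1 n).mul_left ((1 - q) * q ^ k)).congr (fun c => rfl)))]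
    have : ∀ k : ℕ, ∑' f : Fin n → ℕ, ((1 - q) * q ^ k) * w n q f = (1 - q) * q ^ k := by
      intro k; rw [tsum_mul_left, ih, mul_one]
    rw [tsum_congr this, tsum_mul_left, tsum_geometric_of_lt_one h0 h1,
      mul_inv_cancel₀ (by linarith)]

lemma nu_eq_indicator (M : Set (Fin n → ℕ)) : nu n q M = ∑' f, M.indicator (w n q) f :=
  tsum_subtype M (w n q)

lemma nu_nonneg (h0 : 0 ≤ q) (h1 : q ≤ 1) (M : Set (Fin n → ℕ)) : 0 ≤ nu n q M :=
  tsum_nonneg fun f => w_nonneg (n := n) h0 h1 _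

lemma nu_mono_set (h0 : 0 ≤ q) (h1 : q < 1) {M N : Set (Fin n → ℕ)} (hMN : M ⊆ N) :
    nu n q M ≤ nu n q N := by
  rw [nu_eq_indicator, nu_eq_indicator]
  exact Summable.tsum_le_tsum
    (fun f => Set.indicator_le_indicator_of_subset hMN (fun f => w_nonneg h0 h1.le f) f)
    ((summable_w h0 h1 n).indicator M) ((summable_w h0 h1 n).indicator N)

lemma nu_univ (h0 : 0 ≤ q) (h1 : q < 1) : nu n q (Set.univ) = 1 := by
  rw [nu, tsum_univ, tsum_w h0 h1]

lemma nu_le_one (h0 : 0 ≤ q) (h1 : q < 1) (M : Set (Fin n → ℕ)) : nu n q M ≤ 1 :=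
  (nu_mono_set h0 h1 (Set.subset_univ M)).trans (nu_univ h0 h1).le

def coneEquiv (f0 : Fin n → ℕ) : (Fin n → ℕ) ≃ {g | f0 ≤ g} where
  toFun := fun h => ⟨f0 + h, fun i => by simp⟩
  invFun := fun g => g.1 - f0
  left_inv := fun h => by funext i; simp
  right_inv := fun g => by
    ext i
    have h2 : f0 ≤ (g : Fin n → ℕ) := g.2
    exact Nat.add_sub_cancel' (h2 i)

lemma nu_cone (h0 : 0 ≤ q) (h1 : q < 1) (f0 : Fin n → ℕ) :
    nu n q {g | f0 ≤ g} = q ^ (∑ i, f0 i) := by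
  rw [nu, ← (coneEquiv f0).tsum_eq]
  have hterm : ∀ h : Fin n → ℕ, w n q (f0 + h) = q ^ (∑ i, f0 i) * w n q h := by
    intro h
    rw [w, w, ← Finset.prod_pow_eq_pow_sum, ← Finset.prod_mul_distrib]
    refine Finset.prod_congr rfl fun i _ => ?_
    simp only [Pi.add_apply, pow_add]
    ring
  calc (∑' h : Fin n → ℕ, w n q ((coneEquiv f0 h) : Fin n → ℕ))
      = ∑' h : Fin n → ℕ, q ^ (∑ i, f0 i) * w n q h := by
        refine tsum_congr fun h => ?_
        have hco : ((coneEquiv f0 h) : Fin n → ℕ) = f0 + h := rfl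
        rw [hco, hterm]
    _ = q ^ (∑ i, f0 i) := by rw [tsum_mul_left, tsum_w h0 h1, mul_one]

lemma nu_zero_of_not_mem {M : Set (Fin n → ℕ)} (h : (0 : Fin n → ℕ) ∉ M) :
    nu n 0 M = 0 := by
  rw [nu]
  have : ∀ f : M, w n 0 (f : Fin n → ℕ) = 0 := by
    intro f
    have hf : (f : Fin n → ℕ) ≠ 0 := fun hf => h (hf ▸ f.2)
    obtain ⟨i, hi⟩ := Function.ne_iff.1 hf
    refine Finset.prod_eq_zero (Finset.mem_univ i) ?_
    simp [zero_pow (by simpa using hi)]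
  rw [tsum_congr this, tsum_zero]

lemma nu_empty : nu n q (∅ : Set (Fin n → ℕ)) = 0 := by
  rw [nu, tsum_empty]


def sec (k : ℕ) (M : Set (Fin (n + 1) → ℕ)) : Set (Fin n → ℕ) := {f | Fin.cons k f ∈ M}

lemma cons_le_cons {k k' : ℕ} {f f' : Fin n → ℕ} (hk : k ≤ k') (hf : f ≤ f') :
    Fin.cons k f ≤ Fin.cons (α := fun _ => ℕ) k' f' := by
  intro i
  refine Fin.cases ?_ ?_ i
  · simpa using hk
  · intro j; simpa using hf j

lemma sec_upper {M : Set (Fin (n + 1) → ℕ)} (hM : ∀ f ∈ M, ∀ g, f ≤ g → g ∈ M) (k : ℕ) :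
    ∀ f ∈ sec k M, ∀ g, f ≤ g → g ∈ sec k M := by
  intro f hf g hfg
  exact hM _ hf _ (cons_le_cons le_rfl hfg)

lemma sec_mono {M : Set (Fin (n + 1) → ℕ)} (hM : ∀ f ∈ M, ∀ g, f ≤ g → g ∈ M)
    {k k' : ℕ} (hk : k ≤ k') : sec k M ⊆ sec k' M := by
  intro f hf
  exact hM _ hf _ (cons_le_cons hk le_rfl)

lemma nu_decomp (h0 : 0 ≤ q) (h1 : q < 1) (M : Set (Fin (n + 1) → ℕ)) :
    nu (n + 1) q M = ∑' k : ℕ, ((1 - q) * q ^ k) * nu n q (sec k M) := by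
  rw [nu_eq_indicator]
  rw [← (Fin.consEquiv (fun _ : Fin (n + 1) => ℕ)).tsum_eq]
  have hterm : ∀ p : ℕ × (Fin n → ℕ),
      M.indicator (w (n + 1) q) ((Fin.consEquiv (fun _ : Fin (n + 1) => ℕ)) p)
        = ((1 - q) * q ^ p.1) * (sec p.1 M).indicator (w n q) p.2 := by
    rintro ⟨k, f⟩
    have hE : (Fin.consEquiv (fun _ : Fin (n + 1) => ℕ)) (k, f) = Fin.cons k f := rfl
    rw [hE]
    by_cases h : f ∈ sec k M
    · rw [Set.indicator_of_mem h, Set.indicator_of_mem (by exact h), w_cons]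
    · rw [Set.indicator_of_notMem h, Set.indicator_of_notMem (by exact h), mul_zero]
  rw [tsum_congr hterm]
  have hsum : Summable (fun p : ℕ × (Fin n → ℕ) =>
      ((1 - q) * q ^ p.1) * (sec p.1 M).indicator (w n q) p.2) := by
    refine Summable.of_nonneg_of_le ?_ ?_
      (((summable_w h0 h1 (n + 1)).indicator M).comp_injective
        (Fin.consEquiv (fun _ : Fin (n + 1) => ℕ)).injective)
    · intro p
      exact mul_nonneg (mul_nonneg (by linarith) (pow_nonneg h0 _))
        (Set.indicator_nonneg (fun f _ => w_nonneg h0 h1.le f) _)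
    · intro p
      rw [← hterm p]
      rfl
  rw [Summable.tsum_prod' hsum (fun k => ((((summable_w h0 h1 n).indicator (sec k M)).mul_left
    ((1 - q) * q ^ k)).congr (fun c => rfl)))]
  refine tsum_congr fun k => ?_
  have : ∀ c : Fin n → ℕ, (1 - q) * q ^ (k, c).1 * (sec (k, c).1 M).indicator (w n q) (k, c).2
      = ((1 - q) * q ^ k) * (sec k M).indicator (w n q) c := fun c => rfl
  rw [tsum_congr this, tsum_mul_left, nu_eq_indicator]


lemma summable_geom_mul {h : ℕ → ℝ} (hnn : ∀ k, 0 ≤ h k) (h1 : ∀ k, h k ≤ 1)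
    (hq0 : 0 ≤ q) (hq : q < 1) : Summable fun k => q ^ k * h k := by
  refine Summable.of_nonneg_of_le (fun k => mul_nonneg (pow_nonneg hq0 _) (hnn k))
    (fun k => ?_) (summable_geometric_of_lt_one hq0 hq)
  exact mul_le_of_le_one_right (pow_nonneg hq0 _) (h1 k)

lemma tsum_geom_eq {h : ℕ → ℝ} (hm : Monotone h) (h00 : 0 ≤ h 0) (h1 : ∀ k, h k ≤ 1)
    (hq0 : 0 ≤ q) (hq : q < 1) :
    ∑' k : ℕ, ((1 - q) * q ^ k) * h k = h 0 + ∑' k : ℕ, q ^ (k + 1) * (h (k + 1) - h k) := by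
  have hnn : ∀ k, 0 ≤ h k := fun k => h00.trans (hm (Nat.zero_le k))
  have S1 : Summable fun k => q ^ k * h k := summable_geom_mul hnn h1 hq0 hq
  have S2 : Summable fun k => q ^ (k + 1) * h k := by
    refine Summable.of_nonneg_of_le (fun k => mul_nonneg (pow_nonneg hq0 _) (hnn k))
      (fun k => ?_) (summable_geometric_of_lt_one hq0 hq)
    calc q ^ (k + 1) * h k ≤ q ^ (k + 1) * 1 :=
          mul_le_mul_of_nonneg_left (h1 k) (pow_nonneg hq0 _)
      _ = q ^ (k + 1) := mul_one _
      _ ≤ q ^ k := pow_le_pow_of_le_one hq0 hq.le (Nat.le_succ k)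
  have S3 : Summable fun k => q ^ (k + 1) * h (k + 1) :=
    (summable_nat_add_iff 1).2 S1
  have e1 : ∀ k : ℕ, ((1 - q) * q ^ k) * h k = q ^ k * h k - q ^ (k + 1) * h k := by
    intro k; ring
  rw [tsum_congr e1, Summable.tsum_sub S1 S2, Summable.tsum_eq_zero_add S1]
  have e2 : ∀ k : ℕ, q ^ (k + 1) * (h (k + 1) - h k)
      = q ^ (k + 1) * h (k + 1) - q ^ (k + 1) * h k := by intro k; ring
  rw [tsum_congr e2, Summable.tsum_sub S3 S2]
  simp only [pow_zero, one_mul]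
  ring

lemma tsum_geom_mono {h : ℕ → ℝ} (hm : Monotone h) (h00 : 0 ≤ h 0) (h1 : ∀ k, h k ≤ 1)
    (hq0 : 0 ≤ q1) (hq12 : q1 ≤ q2) (hq2 : q2 < 1) :
    ∑' k : ℕ, ((1 - q1) * q1 ^ k) * h k ≤ ∑' k : ℕ, ((1 - q2) * q2 ^ k) * h k := by
  have hq1 : q1 < 1 := lt_of_le_of_lt hq12 hq2
  rw [tsum_geom_eq hm h00 h1 hq0 hq1, tsum_geom_eq hm h00 h1 (hq0.trans hq12) hq2]
  have hnn : ∀ k, 0 ≤ h k := fun k => h00.trans (hm (Nat.zero_le k))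
  have hd : ∀ (q : ℝ), 0 ≤ q → q < 1 → Summable fun k => q ^ (k + 1) * (h (k + 1) - h k) := by
    intro q hq0' hq1'
    refine Summable.of_nonneg_of_le
      (fun k => mul_nonneg (pow_nonneg hq0' _) (sub_nonneg.2 (hm (Nat.le_succ k))))
      (fun k => ?_) (summable_geometric_of_lt_one hq0' hq1')
    calc q ^ (k + 1) * (h (k + 1) - h k) ≤ q ^ (k + 1) * 1 := by
          refine mul_le_mul_of_nonneg_left ?_ (pow_nonneg hq0' _)
          have := hnn k; have := h1 (k + 1); linarith
      _ = q ^ (k + 1) := mul_one _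
      _ ≤ q ^ k := pow_le_pow_of_le_one hq0' hq1'.le (Nat.le_succ k)
  refine add_le_add_right (Summable.tsum_le_tsum (fun k => ?_) (hd q1 hq0 hq1)
    (hd q2 (hq0.trans hq12) hq2)) _
  exact mul_le_mul_of_nonneg_right (pow_le_pow_left₀ hq0 hq12 _)
    (sub_nonneg.2 (hm (Nat.le_succ k)))

lemma summable_nu_seq (h0 : 0 ≤ q) (h1 : q < 1) {qn : ℝ} (hn0 : 0 ≤ qn) (hn1 : qn < 1)
    (Ms : ℕ → Set (Fin n → ℕ)) :
    Summable fun k => ((1 - q) * q ^ k) * nu n qn (Ms k) := by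
  have := summable_geom_mul (q := q) (h := fun k => nu n qn (Ms k))
    (fun k => nu_nonneg hn0 hn1.le _) (fun k => nu_le_one hn0 hn1 _) h0 h1
  refine ((this.mul_left (1 - q)).congr fun k => ?_)
  ring

lemma nu_mono_q : ∀ n (M : Set (Fin n → ℕ)), (∀ f ∈ M, ∀ g, f ≤ g → g ∈ M) →
    ∀ q1 q2 : ℝ, 0 ≤ q1 → q1 ≤ q2 → q2 < 1 → nu n q1 M ≤ nu n q2 M := by
  intro n
  induction n with
  | zero =>
    intro M _ q1 q2 h0 h12 h2
    rcases Set.eq_empty_or_nonempty M with h | h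
    · simp [h, nu_empty]
    · have : M = Set.univ := Set.eq_univ_of_forall fun g => by
        obtain ⟨f, hf⟩ := h; rwa [Subsingleton.elim g f]
      subst this
      rw [nu_univ h0 (lt_of_le_of_lt h12 h2), nu_univ (h0.trans h12) h2]
  | succ n ih =>
    intro M hM q1 q2 h0 h12 h2
    have h1 : q1 < 1 := lt_of_le_of_lt h12 h2
    have h20 : 0 ≤ q2 := h0.trans h12
    rw [nu_decomp h0 h1 M, nu_decomp h20 h2 M]
    calc ∑' k : ℕ, ((1 - q1) * q1 ^ k) * nu n q1 (sec k M)
        ≤ ∑' k : ℕ, ((1 - q1) * q1 ^ k) * nu n q2 (sec k M) := by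
          refine Summable.tsum_le_tsum (fun k => ?_)
            (summable_nu_seq h0 h1 h0 h1 _) (summable_nu_seq h0 h1 h20 h2 _)
          exact mul_le_mul_of_nonneg_left (ih (sec k M) (sec_upper hM k) q1 q2 h0 h12 h2)
            (mul_nonneg (by linarith) (pow_nonneg h0 _))
      _ ≤ ∑' k : ℕ, ((1 - q2) * q2 ^ k) * nu n q2 (sec k M) := by
          refine tsum_geom_mono (h := fun k => nu n q2 (sec k M)) ?_ ?_ ?_ h0 h12 h2
          · exact monotone_nat_of_le_succ fun k =>
              nu_mono_set h20 h2 (sec_mono hM (Nat.le_succ k))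
          · exact nu_nonneg h20 h2.le _
          · exact fun k => nu_le_one h20 h2 _


lemma zero_notMem {M : Set (Fin n → ℕ)} (hM : ∀ f ∈ M, ∀ g, f ≤ g → g ∈ M)
    (hproper : M ≠ Set.univ) : (0 : Fin n → ℕ) ∉ M := by
  intro h0
  exact hproper (Set.eq_univ_of_forall fun g => hM 0 h0 g (fun i => Nat.zero_le _))

lemma nu_pos {M : Set (Fin n → ℕ)} (hM : ∀ f ∈ M, ∀ g, f ≤ g → g ∈ M)
    (hne : M.Nonempty) (h0 : 0 < q) (h1 : q < 1) : 0 < nu n q M := by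
  obtain ⟨f0, hf0⟩ := hne
  have hcone : {g | f0 ≤ g} ⊆ M := fun g hg => hM f0 hf0 g hg
  calc (0 : ℝ) < q ^ (∑ i, f0 i) := pow_pos h0 _
    _ = nu n q {g | f0 ≤ g} := (nu_cone h0.le h1 f0).symm
    _ ≤ nu n q M := nu_mono_set h0.le h1 hcone

lemma nu_strict_q : ∀ n (M : Set (Fin n → ℕ)), (∀ f ∈ M, ∀ g, f ≤ g → g ∈ M) →
    M.Nonempty → M ≠ Set.univ →
    ∀ q1 q2 : ℝ, 0 ≤ q1 → q1 < q2 → q2 < 1 → nu n q1 M < nu n q2 M := by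
  intro n
  induction n with
  | zero =>
    intro M _ hne hproper
    exact absurd (Set.eq_univ_of_forall fun g => by
      obtain ⟨f, hf⟩ := hne; rwa [Subsingleton.elim g f]) hproper
  | succ n ih =>
    intro M hM hne hproper q1 q2 h0 h12 h2
    have h1 : q1 < 1 := lt_trans h12 h2
    have h20 : 0 ≤ q2 := h0.trans h12.le
    rcases eq_or_lt_of_le h0 with hq1z | hq1p
    · -- q1 = 0
      rw [← hq1z, nu_zero_of_not_mem (zero_notMem hM hproper)]
      exact nu_pos hM hne (hq1z ▸ h12) h2
    · by_cases hA : ∃ k : ℕ, (sec k M).Nonempty ∧ sec k M ≠ Set.univ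
      · obtain ⟨k0, hk0ne, hk0pr⟩ := hA
        rw [nu_decomp h0 h1 M, nu_decomp h20 h2 M]
        calc ∑' k : ℕ, ((1 - q1) * q1 ^ k) * nu n q1 (sec k M)
            < ∑' k : ℕ, ((1 - q1) * q1 ^ k) * nu n q2 (sec k M) := by
              refine Summable.tsum_lt_tsum_of_nonneg (i := k0) (fun k => ?_) (fun k => ?_) ?_
                (summable_nu_seq h0 h1 h20 h2 _)
              · exact mul_nonneg (mul_nonneg (by linarith) (pow_nonneg h0 _))
                  (nu_nonneg h0 h1.le _)
              · exact mul_le_mul_of_nonneg_left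
                  (nu_mono_q n (sec k M) (sec_upper hM k) q1 q2 h0 h12.le h2)
                  (mul_nonneg (by linarith) (pow_nonneg h0 _))
              · refine mul_lt_mul_of_pos_left
                  (ih (sec k0 M) (sec_upper hM k0) hk0ne hk0pr q1 q2 h0 h12 h2) ?_
                exact mul_pos (by linarith) (pow_pos hq1p _)
          _ ≤ ∑' k : ℕ, ((1 - q2) * q2 ^ k) * nu n q2 (sec k M) := by
              refine tsum_geom_mono (h := fun k => nu n q2 (sec k M)) ?_ ?_ ?_ h0 h12.le h2
              · exact monotone_nat_of_le_succ fun k =>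
                  nu_mono_set h20 h2 (sec_mono hM (Nat.le_succ k))
              · exact nu_nonneg h20 h2.le _
              · exact fun k => nu_le_one h20 h2 _
      · push_neg at hA
        have hsec : ∀ k : ℕ, sec k M = ∅ ∨ sec k M = Set.univ := by
          intro k
          rcases Set.eq_empty_or_nonempty (sec k M) with h | h
          · exact Or.inl h
          · exact Or.inr (hA k h)
        have hex : ∃ k : ℕ, sec k M = Set.univ := by
          obtain ⟨f, hf⟩ := hne
          have : Fin.tail f ∈ sec (f 0) M := by
            simp only [sec, Set.mem_setOf_eq, Fin.cons_self_tail]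
            exact hf
          rcases hsec (f 0) with h | h
          · rw [h] at this; exact absurd this (Set.notMem_empty _)
          · exact ⟨f 0, h⟩
        classical
        let m := Nat.find hex
        have hm : sec m M = Set.univ := Nat.find_spec hex
        have hmlt : ∀ k < m, sec k M = ∅ := by
          intro k hk
          rcases hsec k with h | h
          · exact h
          · exact absurd h (Nat.find_min hex hk)
        have hm0 : m ≠ 0 := by
          intro hm0
          apply hproper
          apply Set.eq_univ_of_forall
          intro g
          have h00 : sec 0 M = Set.univ := by rw [← hm0]; exact hm
          have hmem : Fin.tail g ∈ sec 0 M := by rw [h00]; trivial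
          have : Fin.cons 0 (Fin.tail g) ∈ M := hmem
          refine hM _ this g ?_
          have : Fin.cons (g 0) (Fin.tail g) = g := Fin.cons_self_tail g
          calc Fin.cons (α := fun _ => ℕ) 0 (Fin.tail g)
              ≤ Fin.cons (g 0) (Fin.tail g) := cons_le_cons (Nat.zero_le _) le_rfl
            _ = g := this
        have hval : ∀ q : ℝ, 0 ≤ q → q < 1 → nu (n + 1) q M = q ^ m := by
          intro q hq0 hq1
          rw [nu_decomp hq0 hq1 M]
          have hterm : ∀ k : ℕ, ((1 - q) * q ^ k) * nu n q (sec k M)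
              = if m ≤ k then (1 - q) * q ^ k else 0 := by
            intro k
            rcases le_or_gt m k with h | h
            · have : sec k M = Set.univ := by
                apply Set.eq_univ_of_forall
                intro f
                have : f ∈ sec m M := hm ▸ Set.mem_univ f
                exact sec_mono hM h this
              rw [this, nu_univ hq0 hq1, mul_one, if_pos h]
            · rw [hmlt k h, nu_empty, mul_zero, if_neg (not_le.2 h)]
          rw [tsum_congr hterm]
          have hsummable : Summable fun k : ℕ => if m ≤ k then (1 - q) * q ^ k else 0 := by
            refine Summable.of_nonneg_of_le (fun k => ?_) (fun k => ?_)
              ((summable_geometric_of_lt_one hq0 hq1).mul_left (1 - q))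
            · split <;> [exact mul_nonneg (by linarith) (pow_nonneg hq0 _); exact le_rfl]
            · split <;> [exact le_rfl; exact mul_nonneg (by linarith) (pow_nonneg hq0 _)]
          rw [← Summable.sum_add_tsum_nat_add m hsummable]
          have hzero : ∀ i ∈ Finset.range m, (if m ≤ i then (1 - q) * q ^ i else 0) = 0 := by
            intro i hi
            rw [if_neg (not_le.2 (Finset.mem_range.1 hi))]
          rw [Finset.sum_congr rfl hzero, Finset.sum_const_zero, zero_add]
          have hshift : ∀ i : ℕ, (if m ≤ i + m then (1 - q) * q ^ (i + m) else 0)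
              = q ^ m * ((1 - q) * q ^ i) := by
            intro i
            rw [if_pos (Nat.le_add_left m i), pow_add]
            ring
          rw [tsum_congr hshift, tsum_mul_left, tsum_mul_left,
            tsum_geometric_of_lt_one hq0 hq1, mul_inv_cancel₀ (by linarith), mul_one]
        rw [hval q1 h0 h1, hval q2 h20 h2]
        exact pow_lt_pow_left₀ h12 h0 hm0


lemma nu_contOn (n : ℕ) (M : Set (Fin n → ℕ)) :
    ContinuousOn (fun q => nu n q M) (Set.Ico (0 : ℝ) 1) := by
  intro a ha
  obtain ⟨ha0, ha1⟩ := ha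
  set r : ℝ := (a + 1) / 2 with hr
  have har : a < r := by rw [hr]; linarith
  have hr1 : r < 1 := by rw [hr]; linarith
  have hr0 : 0 ≤ r := by rw [hr]; linarith
  have hcont : ContinuousOn (fun q => nu n q M) (Set.Icc 0 r) := by
    simp only [nu]
    refine continuousOn_tsum (u := fun f : M => ((1 - r)⁻¹) ^ n * w n r (f : Fin n → ℕ))
      (fun f => ?_) ?_ ?_
    · refine Continuous.continuousOn ?_
      unfold w
      exact continuous_finset_prod _ fun i _ =>
        ((continuous_const.sub continuous_id).mul ((continuous_pow _).comp continuous_id))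
    · exact ((summable_w hr0 hr1 n).subtype M).mul_left _
    · intro f q hq
      obtain ⟨hq0, hqr⟩ := hq
      have hq1 : q ≤ 1 := hqr.trans hr1.le
      rw [Real.norm_of_nonneg (w_nonneg hq0 hq1 _)]
      have step1 : w n q (f : Fin n → ℕ) ≤ ∏ i, r ^ (f : Fin n → ℕ) i := by
        unfold w
        refine Finset.prod_le_prod (fun i _ => mul_nonneg (by linarith) (pow_nonneg hq0 _))
          (fun i _ => ?_)
        calc (1 - q) * q ^ (f : Fin n → ℕ) i ≤ 1 * q ^ (f : Fin n → ℕ) i :=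
              mul_le_mul_of_nonneg_right (by linarith) (pow_nonneg hq0 _)
          _ = q ^ (f : Fin n → ℕ) i := one_mul _
          _ ≤ r ^ (f : Fin n → ℕ) i := pow_le_pow_left₀ hq0 hqr _
      have step2 : (∏ i, r ^ (f : Fin n → ℕ) i)
          = ((1 - r)⁻¹) ^ n * w n r (f : Fin n → ℕ) := by
        unfold w
        rw [Finset.prod_mul_distrib, Finset.prod_const, Finset.card_univ, Fintype.card_fin,
          ← mul_assoc, ← mul_pow, inv_mul_cancel₀ (by linarith), one_pow, one_mul]
      calc w n q (f : Fin n → ℕ) ≤ ∏ i, r ^ (f : Fin n → ℕ) i := step1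
        _ = ((1 - r)⁻¹) ^ n * w n r (f : Fin n → ℕ) := step2
  have hmem : Set.Icc (0 : ℝ) r ∈ nhdsWithin a (Set.Ico (0 : ℝ) 1) := by
    refine Filter.mem_of_superset
      (Filter.inter_mem (mem_nhdsWithin_of_mem_nhds (Iio_mem_nhds har)) self_mem_nhdsWithin) ?_
    rintro x ⟨hx1, hx2, _⟩
    exact ⟨hx2, hx1.le⟩
  exact (hcont a ⟨ha0, har.le⟩).mono_of_mem_nhdsWithin hmem

end GeomAux


theorem stmt_8 (B : Type*) [Fintype B] [Nonempty B] (M : Set (B → ℕ))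
    (hM : ∀ x ∈ M, ∀ y : B → ℕ, x ≤ y → y ∈ M)
    (hMne : M.Nonempty) (hMne' : M ≠ Set.univ) :
    StrictMonoOn (fun x => geomProdProb B x M) (Set.Ici 0) ∧
    ContinuousOn (fun x => geomProdProb B x M) (Set.Ici 0) ∧
    geomProdProb B 0 M = 0 ∧
    Tendsto (fun x => geomProdProb B x M) atTop (𝓝 1) := by
  classical
  have hnpos : 0 < Fintype.card B := Fintype.card_pos
  set n := Fintype.card B with hn
  have hnR : (0 : ℝ) < (n : ℝ) := by exact_mod_cast hnpos
  let e : B ≃ Fin n := Fintype.equivFin B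
  let E : (B → ℕ) ≃ (Fin n → ℕ) := Equiv.arrowCongr e (Equiv.refl ℕ)
  set M' : Set (Fin n → ℕ) := E '' M with hM'
  have hEapp : ∀ (f : B → ℕ) (i : Fin n), E f i = f (e.symm i) := fun f i => rfl
  have hEsymm : ∀ (g : Fin n → ℕ) (b : B), E.symm g b = g (e b) := fun g b => rfl
  have hupper' : ∀ f ∈ M', ∀ g, f ≤ g → g ∈ M' := by
    rintro f ⟨f0, hf0, rfl⟩ g hfg
    refine ⟨E.symm g, hM f0 hf0 _ ?_, E.apply_symm_apply g⟩
    intro b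
    have h1 := hfg (e b)
    rw [hEsymm]
    have h2 : E f0 (e b) = f0 b := by rw [hEapp, e.symm_apply_apply]
    rwa [h2] at h1
  have hne' : M'.Nonempty := hMne.image E
  have hproper' : M' ≠ Set.univ := by
    intro h
    apply hMne'
    apply Set.eq_univ_of_forall
    intro f
    have hmem : E f ∈ M' := h ▸ Set.mem_univ (E f)
    obtain ⟨f', hf', hEf⟩ := hmem
    rwa [← E.injective hEf]
  have h0M : (0 : B → ℕ) ∉ M := fun h =>
    hMne' (Set.eq_univ_of_forall fun g => hM 0 h g fun b => Nat.zero_le _)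
  have h0M' : (0 : Fin n → ℕ) ∉ M' := by
    rintro ⟨f', hf', hEf⟩
    have hf0 : f' = 0 := by
      funext b
      have h3 := congrFun hEf (e b)
      rw [hEapp, e.symm_apply_apply] at h3
      exact h3
    rw [hf0] at hf'
    exact h0M hf'
  set φ : ℝ → ℝ := fun x => 1 - (1 + x / (n : ℝ))⁻¹ with hφ
  have hkey : ∀ x : ℝ, geomProdProb B x M = GeomAux.nu n (φ x) M' := by
    intro x
    unfold geomProdProb GeomAux.nu
    rw [hM']
    rw [← Equiv.tsum_eq (E.image M) (fun g : ↥(E '' M) => GeomAux.w n (φ x) (g : Fin n → ℕ))]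
    refine tsum_congr fun f => ?_
    have hterm : ∀ b : B,
        (1 + x / (n : ℝ))⁻¹ * (1 - (1 + x / (n : ℝ))⁻¹) ^ (f : B → ℕ) b
          = (1 - φ x) * (φ x) ^ (f : B → ℕ) b := by
      intro b
      simp only [hφ, sub_sub_cancel]
    calc ∏ b : B, (1 + x / (n : ℝ))⁻¹ * (1 - (1 + x / (n : ℝ))⁻¹) ^ (f : B → ℕ) b
        = ∏ b : B, (1 - φ x) * (φ x) ^ (f : B → ℕ) b :=
          Finset.prod_congr rfl fun b _ => hterm b
      _ = ∏ i : Fin n, (1 - φ x) * (φ x) ^ (f : B → ℕ) (e.symm i) :=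
          (Equiv.prod_comp e.symm _).symm
      _ = GeomAux.w n (φ x) (((E.image M) f : Fin n → ℕ)) := rfl
  have hφ01 : ∀ x : ℝ, 0 ≤ x → 0 ≤ φ x ∧ φ x < 1 := by
    intro x hx
    have hden : (0 : ℝ) < 1 + x / n := by
      have : 0 ≤ x / n := div_nonneg hx hnR.le
      linarith
    constructor
    · have h4 : (1 + x / (n : ℝ))⁻¹ ≤ 1 := by
        apply inv_le_one_of_one_le₀
        have : 0 ≤ x / n := div_nonneg hx hnR.le
        linarith
      simp only [hφ]
      linarith
    · have h5 : (0 : ℝ) < (1 + x / (n : ℝ))⁻¹ := inv_pos.2 hden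
      simp only [hφ]
      linarith
  have hφmono : ∀ x y : ℝ, 0 ≤ x → x < y → φ x < φ y := by
    intro x y hx hxy
    have hden : (0 : ℝ) < 1 + x / n := by
      have : 0 ≤ x / n := div_nonneg hx hnR.le
      linarith
    have hlt : 1 + x / (n : ℝ) < 1 + y / (n : ℝ) := by
      have : x / (n : ℝ) < y / (n : ℝ) := by
        apply div_lt_div_of_pos_right hxy hnR
      linarith
    have hinv : (1 + y / (n : ℝ))⁻¹ < (1 + x / (n : ℝ))⁻¹ := by
      apply inv_strictAnti₀ hden hlt
    simp only [hφ]
    linarith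
  have hφcont : ContinuousOn φ (Set.Ici (0 : ℝ)) := by
    refine ContinuousOn.sub continuousOn_const (ContinuousOn.inv₀ ?_ ?_)
    · exact (continuous_const.add (continuous_id.div_const _)).continuousOn
    · intro x hx
      have h6 : 0 ≤ x / (n : ℝ) := div_nonneg hx hnR.le
      intro h
      linarith
  have hφmaps : Set.MapsTo φ (Set.Ici (0 : ℝ)) (Set.Ico (0 : ℝ) 1) := by
    intro x hx
    exact ⟨(hφ01 x hx).1, (hφ01 x hx).2⟩
  have hφtop : Tendsto φ atTop (𝓝 1) := by
    have h1 : Tendsto (fun x : ℝ => 1 + x / (n : ℝ)) atTop atTop :=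
      tendsto_atTop_add_const_left atTop 1 (tendsto_id.atTop_div_const hnR)
    have h2 : Tendsto (fun x : ℝ => (1 + x / (n : ℝ))⁻¹) atTop (𝓝 0) :=
      h1.inv_tendsto_atTop
    have h3 := tendsto_const_nhds (x := (1 : ℝ)) (f := atTop (α := ℝ)) |>.sub h2
    simpa using h3
  refine ⟨?_, ?_, ?_, ?_⟩
  · intro x hx y hy hxy
    show geomProdProb B x M < geomProdProb B y M
    rw [hkey x, hkey y]
    exact GeomAux.nu_strict_q n M' hupper' hne' hproper' (φ x) (φ y)
      (hφ01 x hx).1 (hφmono x y hx hxy) (hφ01 y hy).2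
  · have hc : ContinuousOn (fun x => GeomAux.nu n (φ x) M') (Set.Ici (0 : ℝ)) :=
      (GeomAux.nu_contOn n M').comp hφcont hφmaps
    exact hc.congr fun x _ => hkey x
  · rw [hkey 0]
    have hz : φ 0 = 0 := by simp [hφ]
    rw [hz]
    exact GeomAux.nu_zero_of_not_mem h0M'
  · obtain ⟨g0, hg0⟩ := hne'
    set s := ∑ i, g0 i with hs
    have hlow : ∀ x : ℝ, 0 ≤ x → (φ x) ^ s ≤ geomProdProb B x M := by
      intro x hx
      rw [hkey x]
      obtain ⟨hq0, hq1⟩ := hφ01 x hx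
      calc (φ x) ^ s = GeomAux.nu n (φ x) {g | g0 ≤ g} := (GeomAux.nu_cone hq0 hq1 g0).symm
        _ ≤ GeomAux.nu n (φ x) M' :=
            GeomAux.nu_mono_set hq0 hq1 (fun g hg => hupper' g0 hg0 g hg)
    have hup : ∀ x : ℝ, 0 ≤ x → geomProdProb B x M ≤ 1 := by
      intro x hx
      rw [hkey x]
      exact GeomAux.nu_le_one (hφ01 x hx).1 (hφ01 x hx).2 _
    have hlim : Tendsto (fun x => (φ x) ^ s) atTop (𝓝 1) := by
      have := hφtop.pow s
      simpa using this
    refine tendsto_of_tendsto_of_tendsto_of_le_of_le' hlim tendsto_const_nhds ?_ ?_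
    · filter_upwards [eventually_ge_atTop (0 : ℝ)] with x hx using hlow x hx
    · filter_upwards [eventually_ge_atTop (0 : ℝ)] with x hx using hup x hx
end

section
/- Let (W_i)_{i≥1} be i.i.d. standard exponential random variables and Y_∞ = Σ_{i≥0} W_{i+1}/2^i. Then the series defining Y_∞ converges almost surely, and for every x > 0, P(Y_∞ > x) ≤ N·e^{-x}, where N = Π_{j≥1} 2^j/(2^j - 1). -/
set_option maxHeartbeats 1000000

open MeasureTheory ProbabilityTheory Real Set

lemma aux_mgf {c : ℝ} (hc1 : c < 1) :
    ∫⁻ x, ENNReal.ofReal (Real.exp (c * x)) ∂(expMeasure 1) = ENNReal.ofReal ((1 - c)⁻¹) := by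
  have hb : (0:ℝ) < 1 - c := by linarith
  have hme : Measurable fun x : ℝ => ENNReal.ofReal (Real.exp (c * x)) :=
    ENNReal.measurable_ofReal.comp (Real.continuous_exp.measurable.comp (measurable_const_mul c))
  have hpdfm : Measurable (exponentialPDF 1) :=
    ENNReal.measurable_ofReal.comp (measurable_exponentialPDFReal 1)
  rw [show expMeasure 1 = volume.withDensity (exponentialPDF 1) from rfl,
    lintegral_withDensity_eq_lintegral_mul _ hpdfm hme]
  have h1 : ∀ x : ℝ, (exponentialPDF 1 * fun x => ENNReal.ofReal (Real.exp (c * x))) x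
      = (Ici (0:ℝ)).indicator (fun x => ENNReal.ofReal (Real.exp ((c - 1) * x))) x := by
    intro x
    simp only [Pi.mul_apply, indicator]
    split_ifs with h
    · rw [exponentialPDF_of_nonneg h, ← ENNReal.ofReal_mul (by positivity)]
      congr 1
      rw [one_mul, ← Real.exp_add]
      ring_nf
    · rw [exponentialPDF_of_neg (not_le.1 h), zero_mul]
  rw [lintegral_congr h1, lintegral_indicator measurableSet_Ici _,
    ← restrict_Ioi_eq_restrict_Ici]
  have hint : IntegrableOn (fun x : ℝ => Real.exp ((c - 1) * x)) (Ioi 0) := by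
    have := exp_neg_integrableOn_Ioi 0 hb
    simpa [neg_mul, neg_sub] using this.congr_fun (fun x _ => by ring_nf) measurableSet_Ioi
  rw [← ofReal_integral_eq_lintegral_ofReal hint (ae_of_all _ fun x => (Real.exp_pos _).le)]
  congr 1
  have : ∀ x : ℝ, Real.exp ((c - 1) * x) = Real.exp (-((1 - c) * x)) := fun x => by ring_nf
  rw [MeasureTheory.setIntegral_congr_fun measurableSet_Ioi (fun x _ => this x)]
  have := integral_comp_mul_left_Ioi (fun y : ℝ => Real.exp (-y)) 0 hb
  rw [mul_zero] at this
  rw [this, integral_exp_neg_Ioi, neg_zero, Real.exp_zero, smul_eq_mul, mul_one]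

lemma aux_Iic (t : ℝ) (ht : 0 ≤ t) :
    expMeasure 1 (Iic t) = ENNReal.ofReal (1 - Real.exp (-t)) := by
  rw [show expMeasure 1 = volume.withDensity (exponentialPDF 1) from rfl,
    withDensity_apply _ measurableSet_Iic, lintegral_exponentialPDF_eq_antiDeriv one_pos t,
    if_pos ht, one_mul]

lemma aux_tail (t : ℝ) : expMeasure 1 (Ioi t) ≤ ENNReal.ofReal (Real.exp (-t)) := by
  have : IsProbabilityMeasure (expMeasure 1) := isProbabilityMeasure_expMeasure one_pos
  rcases le_or_gt 0 t with ht | ht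
  · have h := measure_compl (μ := expMeasure 1) (measurableSet_Iic (a := t)) (measure_ne_top _ _)
    rw [compl_Iic] at h
    rw [h, aux_Iic t ht, measure_univ, ← ENNReal.ofReal_one,
      ← ENNReal.ofReal_sub _ (sub_nonneg.mpr (Real.exp_le_one_iff.mpr (neg_nonpos.mpr ht)))]
    simp
  · calc expMeasure 1 (Ioi t) ≤ 1 := prob_le_one
      _ = ENNReal.ofReal 1 := by simp
      _ ≤ _ := ENNReal.ofReal_le_ofReal
        (by have := Real.one_le_exp (show (0:ℝ) ≤ -t by linarith); linarith)

lemma aux_null : expMeasure 1 (Iio 0) = 0 := by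
  have := aux_Iic 0 le_rfl
  simp at this
  exact le_antisymm (le_trans (measure_mono Iio_subset_Iic_self) this.le) (zero_le)

/-- If `(W_i)_{i ≥ 1}` are i.i.d. standard exponential random variables and
`Y_∞ = ∑_{i ≥ 0} W_{i+1} / 2^i`, then the series converges a.s. and for every `x > 0`,
`P(Y_∞ > x) ≤ N e^{-x}` where `N = ∏_{j ≥ 1} 2^j / (2^j - 1)`. -/
theorem stmt_11 {Ω : Type*} [MeasurableSpace Ω] (P : Measure Ω) [IsProbabilityMeasure P]
    (W : ℕ → Ω → ℝ) (hmeas : ∀ i, Measurable (W i))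
    (hindep : iIndepFun W P)
    (hexp : ∀ i, Measure.map (W i) P = expMeasure 1) :
    (∀ᵐ ω ∂P, Summable fun i : ℕ => W (i + 1) ω / 2 ^ i) ∧
    ∀ x : ℝ, 0 < x →
      P {ω | x < ∑' i : ℕ, W (i + 1) ω / 2 ^ i}
        ≤ ENNReal.ofReal ((∏' j : ℕ, (2 ^ (j + 1) : ℝ) / (2 ^ (j + 1) - 1)) * Real.exp (-x)) := by
  set r : ℕ → ℝ := fun j => (2 ^ (j + 1) : ℝ) / (2 ^ (j + 1) - 1) with hrdef
  set c : ℕ → ℝ := fun i => 2 * (2:ℝ)⁻¹ ^ i with hcdef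
  set g : ℕ → Ω → ℝ := fun i ω => W i ω * c i with hgdef
  have hgmeas : ∀ i, Measurable (g i) := fun i => (hmeas i).mul_const _
  have hgindep : iIndepFun g P :=
    hindep.comp (fun i (x : ℝ) => x * c i) (fun i => measurable_mul_const _)
  have hc_eq : ∀ j : ℕ, c (j + 2) = ((2:ℝ) ^ (j + 1))⁻¹ := by
    intro j
    have h2 : ((2:ℝ)⁻¹) ^ (j + 2) = (2:ℝ)⁻¹ ^ (j + 1) * 2⁻¹ := pow_succ _ _
    simp only [hcdef, h2, inv_pow]
    have : (0:ℝ) < 2 ^ (j+1) := by positivity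
    field_simp
    ring
  have hc_pos : ∀ j : ℕ, 0 < c (j + 2) := fun j => by rw [hc_eq]; positivity
  have hc_lt : ∀ j : ℕ, c (j + 2) < 1 := fun j => by
    rw [hc_eq]
    rw [inv_lt_one_iff₀]
    right
    exact one_lt_pow₀ (by norm_num) (by omega)
  -- MGF computation for each variable
  have key : ∀ (k : ℕ) (t : ℝ), t < 1 →
      ∫⁻ ω, ENNReal.ofReal (Real.exp (t * W k ω)) ∂P = ENNReal.ofReal ((1 - t)⁻¹) := by
    intro k t ht1
    have hm : Measurable fun x : ℝ => ENNReal.ofReal (Real.exp (t * x)) :=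
      ENNReal.measurable_ofReal.comp (Real.continuous_exp.measurable.comp (measurable_const_mul t))
    rw [← lintegral_map hm (hmeas k), hexp k, aux_mgf ht1]
  -- a.e. nonnegativity
  have hW0 : ∀ᵐ ω ∂P, ∀ i, 0 ≤ W i ω := by
    rw [ae_all_iff]
    intro i
    have h0 : P (W i ⁻¹' (Iio 0)) = 0 := by
      rw [← Measure.map_apply (hmeas i) measurableSet_Iio, hexp i, aux_null]
    rw [ae_iff]
    convert h0 using 2
    ext ω
    simp [not_le]
  -- mean bound
  have hmean : ∀ k, ∫⁻ ω, ENNReal.ofReal (W k ω) ∂P ≤ 4 := by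
    intro k
    have hle : ∀ ω, ENNReal.ofReal (W k ω)
        ≤ ENNReal.ofReal 2 * ENNReal.ofReal (Real.exp (2⁻¹ * W k ω)) := by
      intro ω
      rw [← ENNReal.ofReal_mul (by norm_num)]
      apply ENNReal.ofReal_le_ofReal
      have h1 := Real.add_one_le_exp (2⁻¹ * W k ω)
      nlinarith [Real.exp_pos (2⁻¹ * W k ω)]
    have hm2 : Measurable fun ω => ENNReal.ofReal (Real.exp (2⁻¹ * W k ω)) :=
      ENNReal.measurable_ofReal.comp
        (Real.continuous_exp.measurable.comp ((hmeas k).const_mul _))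
    calc ∫⁻ ω, ENNReal.ofReal (W k ω) ∂P
        ≤ ∫⁻ ω, ENNReal.ofReal 2 * ENNReal.ofReal (Real.exp (2⁻¹ * W k ω)) ∂P :=
          lintegral_mono hle
      _ = ENNReal.ofReal 2 * ∫⁻ ω, ENNReal.ofReal (Real.exp (2⁻¹ * W k ω)) ∂P :=
          lintegral_const_mul _ hm2
      _ = ENNReal.ofReal 2 * ENNReal.ofReal ((1 - 2⁻¹)⁻¹) := by
          rw [key k 2⁻¹ (by norm_num)]
      _ ≤ 4 := by
          rw [← ENNReal.ofReal_mul (by norm_num),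
            show (2:ℝ) * (1 - 2⁻¹)⁻¹ = 4 by norm_num]
          simp [ENNReal.ofReal_ofNat]
  -- a.s. summability
  have hterm_meas : ∀ i : ℕ, Measurable fun ω => ENNReal.ofReal (W (i+1) ω) * (2⁻¹ : ENNReal) ^ i :=
    fun i => (ENNReal.measurable_ofReal.comp (hmeas (i+1))).mul_const _
  have hlintsum : ∫⁻ ω, ∑' i : ℕ, ENNReal.ofReal (W (i+1) ω) * (2⁻¹ : ENNReal) ^ i ∂P ≠ ⊤ := by
    rw [lintegral_tsum (fun i => (hterm_meas i).aemeasurable)]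
    have hb : ∀ i : ℕ, ∫⁻ ω, ENNReal.ofReal (W (i+1) ω) * (2⁻¹ : ENNReal) ^ i ∂P
        ≤ 4 * (2⁻¹ : ENNReal) ^ i := by
      intro i
      rw [lintegral_mul_const _ (hmeas (i+1)).ennreal_ofReal]
      exact mul_le_mul_left (hmean (i+1)) _
    refine ne_top_of_le_ne_top ?_ (ENNReal.tsum_le_tsum hb)
    rw [ENNReal.tsum_mul_left, ENNReal.tsum_geometric]
    simp [ENNReal.sub_half]
    norm_num
  have hlt : ∀ᵐ ω ∂P, ∑' i : ℕ, ENNReal.ofReal (W (i+1) ω) * (2⁻¹ : ENNReal) ^ i ≠ ⊤ := by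
    filter_upwards [ae_lt_top (Measurable.ennreal_tsum hterm_meas) hlintsum] with ω h
    exact h.ne
  have part1 : ∀ᵐ ω ∂P, Summable fun i : ℕ => W (i + 1) ω / 2 ^ i := by
    filter_upwards [hW0, hlt] with ω h0 hfin
    have hs := ENNReal.summable_toReal hfin
    refine hs.congr fun i => ?_
    rw [ENNReal.toReal_mul, ENNReal.toReal_pow, ENNReal.toReal_ofReal (h0 (i+1)),
      ENNReal.toReal_inv, ENNReal.toReal_ofNat, div_eq_mul_inv, inv_pow]
  refine ⟨part1, ?_⟩
  -- tail sum
  set Z : Ω → ℝ := fun ω => (∑' j : ℕ, ENNReal.ofReal (g (j+2) ω)).toReal with hZdef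
  have hWmT : ∀ n, 2 ≤ n → Measurable[⨆ n ∈ {n : ℕ | 2 ≤ n},
      MeasurableSpace.comap (W n) inferInstance] (W n) := by
    intro n hn
    rw [measurable_iff_comap_le]
    exact le_iSup₂ (f := fun (n : ℕ) (_ : n ∈ {n : ℕ | 2 ≤ n}) =>
      MeasurableSpace.comap (W n) inferInstance) n hn
  have hZmT : Measurable[⨆ n ∈ {n : ℕ | 2 ≤ n},
      MeasurableSpace.comap (W n) inferInstance] Z := by
    apply Measurable.ennreal_toReal
    apply Measurable.ennreal_tsum
    intro j
    exact ENNReal.measurable_ofReal.comp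
      (Measurable.mul_const (hWmT (j+2) (by omega)) _)
  have hZmeas : Measurable Z :=
    hZmT.mono (iSup₂_le fun i _ => (hmeas i).comap_le) le_rfl
  have hIndepWZ : IndepFun (W 1) Z P := by
    have h := indep_iSup_of_disjoint
      (m := fun n : ℕ => MeasurableSpace.comap (W n) inferInstance)
      (fun i => (hmeas i).comap_le) hindep.iIndep
      (S := {1}) (T := {n : ℕ | 2 ≤ n})
      (Set.disjoint_left.mpr (by intro a ha hb; simp at ha; simp [ha] at hb))
    have h1 : MeasurableSpace.comap (W 1) inferInstance
        ≤ ⨆ n ∈ ({1} : Set ℕ), MeasurableSpace.comap (W n) inferInstance :=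
      le_iSup₂ (f := fun (n : ℕ) (_ : n ∈ ({1} : Set ℕ)) =>
        MeasurableSpace.comap (W n) inferInstance) 1 rfl
    exact indep_of_indep_of_le_right (indep_of_indep_of_le_left h h1)
      (measurable_iff_comap_le.mp hZmT)
  -- partial sums
  set S : ℕ → Ω → ℝ := fun n ω => ∑ j ∈ Finset.range n, g (j+2) ω with hSdef
  have hSmeas : ∀ n, Measurable (S n) := fun n =>
    Finset.measurable_sum _ (fun j _ => hgmeas (j+2))
  have hSg : ∀ n, IndepFun (S n) (g (n+2)) P := by
    intro n
    have hnot : n + 2 ∉ (Finset.range n).image (· + 2) := by simp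
    have h := iIndepFun.indepFun_finset_sum_of_notMem hgindep hgmeas hnot
    have he : (∑ j ∈ (Finset.range n).image (· + 2), g j) = S n := by
      funext ω
      rw [Finset.sum_apply, Finset.sum_image (fun a _ b _ h => by omega)]
    rwa [he] at h
  -- single factor
  have hfac : ∀ n : ℕ, ∫⁻ ω, ENNReal.ofReal (Real.exp (g (n+2) ω)) ∂P = ENNReal.ofReal (r n) := by
    intro n
    have heq : ∀ ω, g (n+2) ω = c (n+2) * W (n+2) ω := fun ω => mul_comm _ _
    calc ∫⁻ ω, ENNReal.ofReal (Real.exp (g (n+2) ω)) ∂P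
        = ∫⁻ ω, ENNReal.ofReal (Real.exp (c (n+2) * W (n+2) ω)) ∂P :=
          lintegral_congr fun ω => by rw [heq]
      _ = ENNReal.ofReal ((1 - c (n+2))⁻¹) := key (n+2) _ (hc_lt n)
      _ = ENNReal.ofReal (r n) := by
          congr 1
          rw [hc_eq, hrdef]
          have h2 : (0:ℝ) < 2 ^ (n+1) := by positivity
          have h3 : (0:ℝ) < 2 ^ (n+1) - 1 := by
            have : (2:ℝ) ≤ 2 ^ (n+1) := by
              calc (2:ℝ) = 2 ^ 1 := (pow_one 2).symm
              _ ≤ 2 ^ (n+1) := pow_le_pow_right₀ (by norm_num) (by omega)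
            linarith
          field_simp
  -- product formula
  have hmexp : Measurable fun y : ℝ => ENNReal.ofReal (Real.exp y) :=
    ENNReal.measurable_ofReal.comp Real.continuous_exp.measurable
  have hprod : ∀ n : ℕ, ∫⁻ ω, ENNReal.ofReal (Real.exp (S n ω)) ∂P
      = ENNReal.ofReal (∏ j ∈ Finset.range n, r j) := by
    intro n
    induction n with
    | zero => simp [hSdef]
    | succ n ih =>
      have hsplit : ∀ ω, ENNReal.ofReal (Real.exp (S (n+1) ω))
          = ((fun ω => ENNReal.ofReal (Real.exp (S n ω)))
            * fun ω => ENNReal.ofReal (Real.exp (g (n+2) ω))) ω := by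
        intro ω
        simp only [Pi.mul_apply, hSdef, Finset.sum_range_succ, Real.exp_add]
        rw [ENNReal.ofReal_mul (Real.exp_pos _).le]
      rw [lintegral_congr hsplit,
        lintegral_mul_eq_lintegral_mul_lintegral_of_indepFun
          (show Measurable fun ω => ENNReal.ofReal (Real.exp (S n ω)) from
            hmexp.comp (hSmeas n))
          (show Measurable fun ω => ENNReal.ofReal (Real.exp (g (n+2) ω)) from
            hmexp.comp (hgmeas (n+2)))
          (show IndepFun (fun ω => ENNReal.ofReal (Real.exp (S n ω)))
              (fun ω => ENNReal.ofReal (Real.exp (g (n+2) ω))) P from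
            (hSg n).comp hmexp hmexp),
        ih, hfac n, ← ENNReal.ofReal_mul (Finset.prod_nonneg fun j _ =>
          le_trans zero_le_one (by
            have h3 : (1:ℝ) ≤ 2 ^ (j+1) - 1 := by
              have : (2:ℝ) ≤ 2 ^ (j+1) := by
                calc (2:ℝ) = 2 ^ 1 := (pow_one 2).symm
                _ ≤ 2 ^ (j+1) := pow_le_pow_right₀ (by norm_num) (by omega)
              linarith
            rw [hrdef]
            exact (one_le_div (by linarith)).mpr (by linarith))),
        Finset.prod_range_succ]
  -- r bounds
  have hden : ∀ j : ℕ, (1:ℝ) ≤ (2:ℝ) ^ (j+1) - 1 := by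
    intro j
    have : (2:ℝ) ≤ 2 ^ (j+1) := by
      calc (2:ℝ) = 2 ^ 1 := (pow_one 2).symm
      _ ≤ 2 ^ (j+1) := pow_le_pow_right₀ (by norm_num) (by omega)
    linarith
  have hr1 : ∀ j, 1 ≤ r j := fun j =>
    (one_le_div (by linarith [hden j])).mpr (by linarith [hden j])
  have hrpos : ∀ j, 0 < r j := fun j => lt_of_lt_of_le one_pos (hr1 j)
  have hlogsum : Summable fun j : ℕ => Real.log (r j) := by
    have hgeo : Summable fun j : ℕ => ((2:ℝ)⁻¹) ^ j :=
      summable_geometric_of_lt_one (by norm_num) (by norm_num)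
    refine Summable.of_nonneg_of_le (fun j => Real.log_nonneg (hr1 j)) (fun j => ?_) hgeo
    have hb := hden j
    have hlog := Real.log_le_sub_one_of_pos (hrpos j)
    have hr_sub : r j - 1 = 1 / ((2:ℝ) ^ (j+1) - 1) := by
      rw [hrdef]
      field_simp
      ring
    have h2 : (1:ℝ) / ((2:ℝ) ^ (j+1) - 1) ≤ (2⁻¹) ^ j := by
      rw [div_le_iff₀ (by linarith)]
      have hkey : ((2:ℝ)⁻¹) ^ j * 2 ^ (j+1) = 2 := by
        rw [inv_pow, pow_succ]
        field_simp
      have hle1 : ((2:ℝ)⁻¹) ^ j ≤ 1 := pow_le_one₀ (by norm_num) (by norm_num)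
      nlinarith
    linarith
  -- tail summability and identification
  have hZtail : ∀ᵐ ω ∂P, Summable fun j : ℕ => g (j+2) ω := by
    filter_upwards [part1] with ω h
    have h1 : Summable fun i : ℕ => W (i + 1 + 1) ω / 2 ^ (i + 1) :=
      (summable_nat_add_iff 1).mpr h
    refine h1.congr fun j => ?_
    rw [congrFun (congrFun hgdef (j+2)) ω, hc_eq, div_eq_mul_inv]
  have hnn_g : ∀ᵐ ω ∂P, ∀ j : ℕ, 0 ≤ g (j+2) ω := by
    filter_upwards [hW0] with ω h0 j
    rw [congrFun (congrFun hgdef (j+2)) ω]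
    exact mul_nonneg (h0 _) (hc_pos j).le
  have hZeq : ∀ᵐ ω ∂P, Z ω = ∑' j : ℕ, g (j+2) ω := by
    filter_upwards [hnn_g, hZtail] with ω hnn hs
    rw [congrFun hZdef ω, ← ENNReal.ofReal_tsum_of_nonneg hnn hs,
      ENNReal.toReal_ofReal (tsum_nonneg hnn)]
  -- monotone convergence bound
  have hmono : ∀ᵐ ω ∂P, Monotone fun n => ENNReal.ofReal (Real.exp (S n ω)) := by
    filter_upwards [hnn_g] with ω hnn
    intro a b hab
    apply ENNReal.ofReal_le_ofReal
    apply Real.exp_le_exp.mpr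
    rw [congrFun (congrFun hSdef a) ω, congrFun (congrFun hSdef b) ω]
    exact Finset.sum_le_sum_of_subset_of_nonneg
      (Finset.range_subset_range.mpr hab) (fun j _ _ => hnn j)
  have hMCT : ∫⁻ ω, ENNReal.ofReal (Real.exp (Z ω)) ∂P ≤ ENNReal.ofReal (∏' j : ℕ, r j) := by
    have hae : ∀ᵐ ω ∂P,
        ENNReal.ofReal (Real.exp (Z ω)) = ⨆ n, ENNReal.ofReal (Real.exp (S n ω)) := by
      filter_upwards [hZtail, hZeq, hmono] with ω hs hz hm
      have h1 : Filter.Tendsto (fun n => S n ω) Filter.atTop (nhds (Z ω)) := by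
        rw [hz]
        exact hs.hasSum.tendsto_sum_nat.congr fun n => (congrFun (congrFun hSdef n) ω).symm
      have htend : Filter.Tendsto (fun n => ENNReal.ofReal (Real.exp (S n ω)))
          Filter.atTop (nhds (ENNReal.ofReal (Real.exp (Z ω)))) :=
        (ENNReal.continuous_ofReal.tendsto _).comp ((Real.continuous_exp.tendsto _).comp h1)
      exact (iSup_eq_of_tendsto hm htend).symm
    rw [lintegral_congr_ae hae,
      lintegral_iSup' (fun n => (show Measurable fun ω => ENNReal.ofReal (Real.exp (S n ω)) from
        hmexp.comp (hSmeas n)).aemeasurable) hmono]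
    apply iSup_le
    intro n
    rw [hprod n]
    have hexp_prod : ∏ j ∈ Finset.range n, r j ≤ ∏' j : ℕ, r j := by
      have he1 : ∏ j ∈ Finset.range n, r j
          = Real.exp (∑ j ∈ Finset.range n, Real.log (r j)) := by
        rw [Real.exp_sum]
        exact Finset.prod_congr rfl fun j _ => (Real.exp_log (hrpos j)).symm
      have he2 : Real.exp (∑' j : ℕ, Real.log (r j)) = ∏' j : ℕ, r j :=
        Real.rexp_tsum_eq_tprod hrpos hlogsum
      rw [he1, ← he2]
      exact Real.exp_le_exp.mpr
        (Summable.sum_le_tsum _ (fun j _ => Real.log_nonneg (hr1 j)) hlogsum)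
    exact ENNReal.ofReal_le_ofReal hexp_prod
  -- main bound
  intro x hx
  have hYae : {ω | x < ∑' i : ℕ, W (i + 1) ω / 2 ^ i} =ᵐ[P] {ω | x < Z ω + W 1 ω} := by
    filter_upwards [part1, hZeq] with ω hsumm hz
    have h0 : W (0 + 1) ω / 2 ^ (0:ℕ) = W 1 ω := by norm_num
    have ht : ∑' i : ℕ, W (i + 1 + 1) ω / 2 ^ (i + 1) = Z ω := by
      rw [hz]
      exact tsum_congr fun j => by
        rw [congrFun (congrFun hgdef (j+2)) ω, hc_eq, div_eq_mul_inv]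
    have hteq : ∑' i : ℕ, W (i + 1) ω / 2 ^ i = Z ω + W 1 ω := by
      rw [hsumm.tsum_eq_zero_add, h0, ht, add_comm]
    show (x < ∑' i : ℕ, W (i + 1) ω / 2 ^ i) = (x < Z ω + W 1 ω)
    rw [hteq]
  rw [measure_congr hYae]
  have hAmeas : MeasurableSet {p : ℝ × ℝ | x < p.1 + p.2} :=
    (isOpen_lt continuous_const (continuous_fst.add continuous_snd)).measurableSet
  have hmap : P.map (fun ω => (Z ω, W 1 ω)) = (P.map Z).prod (P.map (W 1)) :=
    (indepFun_iff_map_prod_eq_prod_map_map hZmeas.aemeasurable (hmeas 1).aemeasurable).mp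
      hIndepWZ.symm
  have hpre : {ω | x < Z ω + W 1 ω}
      = (fun ω => (Z ω, W 1 ω)) ⁻¹' {p : ℝ × ℝ | x < p.1 + p.2} := rfl
  rw [hpre, ← Measure.map_apply (hZmeas.prodMk (hmeas 1)) hAmeas, hmap,
    Measure.prod_apply hAmeas]
  have hsec : ∀ z : ℝ, (Prod.mk z ⁻¹' {p : ℝ × ℝ | x < p.1 + p.2}) = Ioi (x - z) := by
    intro z; ext a; simp [Set.mem_setOf_eq, sub_lt_iff_lt_add']
  have hN0 : 0 ≤ ∏' j : ℕ, r j := by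
    rw [← Real.rexp_tsum_eq_tprod hrpos hlogsum]
    exact (Real.exp_pos _).le
  calc ∫⁻ z, (P.map (W 1)) (Prod.mk z ⁻¹' {p : ℝ × ℝ | x < p.1 + p.2}) ∂(P.map Z)
      ≤ ∫⁻ z, ENNReal.ofReal (Real.exp z) * ENNReal.ofReal (Real.exp (-x)) ∂(P.map Z) := by
        refine lintegral_mono fun z => ?_
        show (P.map (W 1)) (Prod.mk z ⁻¹' {p : ℝ × ℝ | x < p.1 + p.2})
          ≤ ENNReal.ofReal (Real.exp z) * ENNReal.ofReal (Real.exp (-x))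
        rw [hsec z, hexp 1]
        calc expMeasure 1 (Ioi (x - z))
            ≤ ENNReal.ofReal (Real.exp (-(x - z))) := aux_tail _
          _ = ENNReal.ofReal (Real.exp z) * ENNReal.ofReal (Real.exp (-x)) := by
              rw [show -(x - z) = z + -x from by ring, Real.exp_add,
                ENNReal.ofReal_mul (Real.exp_pos _).le]
    _ = (∫⁻ z, ENNReal.ofReal (Real.exp z) ∂(P.map Z)) * ENNReal.ofReal (Real.exp (-x)) :=
        lintegral_mul_const _ hmexp
    _ = (∫⁻ ω, ENNReal.ofReal (Real.exp (Z ω)) ∂P) * ENNReal.ofReal (Real.exp (-x)) := by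
        rw [lintegral_map hmexp hZmeas]
    _ ≤ ENNReal.ofReal (∏' j : ℕ, r j) * ENNReal.ofReal (Real.exp (-x)) :=
        mul_le_mul_left hMCT _
    _ = ENNReal.ofReal ((∏' j : ℕ, r j) * Real.exp (-x)) :=
        (ENNReal.ofReal_mul hN0).symm
end

section
/- Define P(z) = Σ_{j∈ℤ} (-1)^j 2^{-j(j+1)/2} · (2^j z)/(2^j z + 1) for z ∈ ℂ not equal to 0 or -2^j for any j ∈ ℤ. Then the defining sum converges and P satisfies the functional equation P(z) = z·P(2z) wherever both sides are defined. -/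
/-- The `j`-th term of the sum defining `𝒫(z) = ∑_{j ∈ ℤ} (-1)^j 2^{-j(j+1)/2} (2^j z)/(2^j z + 1)`. -/
noncomputable def pTerm (z : ℂ) (j : ℤ) : ℂ :=
  (-1 : ℂ) ^ j * (2 : ℂ) ^ (-(j * (j + 1) / 2)) * ((2 : ℂ) ^ j * z) / ((2 : ℂ) ^ j * z + 1)

lemma two_mul_ediv (j : ℤ) : 2 * (j * (j + 1) / 2) = j * (j + 1) := by
  have h : (2 : ℤ) ∣ j * (j + 1) := (Int.even_mul_succ_self j).two_dvd
  exact Int.mul_ediv_cancel' h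

lemma two_mul_ediv' (j : ℤ) : 2 * (j * (j - 1) / 2) = j * (j - 1) := by
  rw [show j * (j - 1) = (j - 1) * ((j - 1) + 1) by ring]
  exact two_mul_ediv (j - 1)

lemma norm_pTerm (z : ℂ) (j : ℤ) :
    ‖pTerm z j‖ = (2:ℝ)^(-(j*(j+1)/2)) * ((2:ℝ)^j * ‖z‖) / ‖(2:ℂ)^j * z + 1‖ := by
  unfold pTerm
  rw [norm_div, norm_mul, norm_mul, norm_mul, norm_zpow, norm_zpow, norm_zpow]
  norm_num

lemma hg_summable : Summable (fun n : ℕ => 2 * (1/2:ℝ)^n) :=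
  (summable_geometric_of_lt_one (by norm_num) (by norm_num)).mul_left 2

lemma hpow_eq (n : ℕ) : (2:ℝ)^(-(n:ℤ)) = (1/2:ℝ)^n := by
  rw [zpow_neg, zpow_natCast, ← inv_pow, one_div]

lemma summable_pTerm (z : ℂ) (hz : z ≠ 0) :
    Summable (fun j : ℤ => pTerm z j) := by
  have hr : 0 < ‖z‖ := norm_pos_iff.mpr hz
  apply Summable.of_nat_of_neg
  · obtain ⟨N, hN⟩ := pow_unbounded_of_one_lt (2 / ‖z‖) (one_lt_two (α := ℝ))
    apply Summable.of_norm_bounded_eventually_nat (g := fun n => 2 * (1/2:ℝ)^n) hg_summable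
    filter_upwards [Filter.eventually_ge_atTop (max N 1)] with n hn
    have hn1 : 1 ≤ n := le_trans (le_max_right N 1) hn
    have hnN : N ≤ n := le_trans (le_max_left N 1) hn
    rw [norm_pTerm]
    set e : ℤ := (n:ℤ) * ((n:ℤ) + 1) / 2 with he
    have h2e : 2 * e = (n:ℤ) * ((n:ℤ) + 1) := two_mul_ediv _
    have hne : (n:ℤ) ≤ e := by nlinarith [h2e, Int.ofNat_le.mpr hn1]
    have hc : (2:ℝ)^(-e) ≤ (1/2:ℝ)^n := by
      rw [← hpow_eq]
      exact zpow_le_zpow_right₀ one_le_two (by omega)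
    have hcpos : (0:ℝ) < (2:ℝ)^(-e) := zpow_pos (by norm_num) _
    set w : ℝ := (2:ℝ)^(n:ℤ) * ‖z‖ with hw
    have hw2 : 2 ≤ w := by
      have h1 : 2 / ‖z‖ < 2^N := hN
      have h2 : (2:ℝ)^N ≤ (2:ℝ)^n := pow_le_pow_right₀ one_le_two hnN
      have h3 : 2 / ‖z‖ < 2^n := lt_of_lt_of_le h1 h2
      rw [hw, zpow_natCast]
      rw [div_lt_iff₀ hr] at h3
      nlinarith
    have hwnorm : ‖(2:ℂ)^(n:ℤ) * z‖ = w := by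
      rw [hw, norm_mul, norm_zpow, Complex.norm_ofNat]
    have hd : w - 1 ≤ ‖(2:ℂ)^(n:ℤ) * z + 1‖ := by
      have := norm_sub_le ((2:ℂ)^(n:ℤ) * z + 1) 1
      simp only [add_sub_cancel_right, norm_one] at this
      rw [hwnorm] at this
      linarith
    have hdpos : 0 < ‖(2:ℂ)^(n:ℤ) * z + 1‖ := by linarith
    rw [div_le_iff₀ hdpos]
    have hppos : (0:ℝ) < (1/2:ℝ)^n := by positivity
    nlinarith [mul_le_mul_of_nonneg_right hc (le_of_lt (lt_of_lt_of_le zero_lt_two hw2)),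
      mul_le_mul_of_nonneg_left hd (le_of_lt hppos)]
  · obtain ⟨M, hM⟩ := pow_unbounded_of_one_lt (2 * ‖z‖) (one_lt_two (α := ℝ))
    apply Summable.of_norm_bounded_eventually_nat (g := fun n => 2 * (1/2:ℝ)^n) hg_summable
    filter_upwards [Filter.eventually_ge_atTop (max M 2)] with n hn
    have hn2 : 2 ≤ n := le_trans (le_max_right M 2) hn
    have hnM : M ≤ n := le_trans (le_max_left M 2) hn
    rw [norm_pTerm]
    set e : ℤ := (-(n:ℤ)) * ((-(n:ℤ)) + 1) / 2 with he
    have h2e : 2 * e = (-(n:ℤ)) * ((-(n:ℤ)) + 1) := two_mul_ediv _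
    have hne : (n:ℤ) - 1 ≤ e := by nlinarith [h2e, Int.ofNat_le.mpr hn2]
    have hc : (2:ℝ)^(-e) ≤ 2 * (1/2:ℝ)^n := by
      have : (2:ℝ)^(-e) ≤ (2:ℝ)^(-(n:ℤ)+1) := zpow_le_zpow_right₀ one_le_two (by omega)
      rw [zpow_add₀ (two_ne_zero), hpow_eq] at this
      rw [mul_comm] at this
      simpa using this
    have hcpos : (0:ℝ) < (2:ℝ)^(-e) := zpow_pos (by norm_num) _
    set w : ℝ := (2:ℝ)^(-(n:ℤ)) * ‖z‖ with hw
    have hwpos : 0 < w := by positivity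
    have hw2 : w ≤ 1/2 := by
      have h1 : 2 * ‖z‖ < 2^M := hM
      have h2 : (2:ℝ)^M ≤ (2:ℝ)^n := pow_le_pow_right₀ one_le_two hnM
      have h3 : 2 * ‖z‖ ≤ 2^n := le_trans (le_of_lt h1) h2
      rw [hw, hpow_eq]
      have key : (1/2:ℝ)^n * 2^n = 1 := by rw [← mul_pow]; norm_num
      have hp : (0:ℝ) < (1/2:ℝ)^n := by positivity
      nlinarith [mul_le_mul_of_nonneg_left h3 (le_of_lt hp), key]
    have hwnorm : ‖(2:ℂ)^(-(n:ℤ)) * z‖ = w := by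
      rw [hw, norm_mul, norm_zpow, Complex.norm_ofNat]
    have hd : 1 - w ≤ ‖(2:ℂ)^(-(n:ℤ)) * z + 1‖ := by
      have := norm_sub_le ((2:ℂ)^(-(n:ℤ)) * z + 1) ((2:ℂ)^(-(n:ℤ)) * z)
      simp only [add_sub_cancel_left, norm_one] at this
      rw [hwnorm] at this
      linarith
    have hdpos : 0 < ‖(2:ℂ)^(-(n:ℤ)) * z + 1‖ := by linarith
    rw [div_le_iff₀ hdpos]
    nlinarith [mul_le_mul_of_nonneg_right hc (le_of_lt hwpos),
      mul_le_mul_of_nonneg_left hd (le_of_lt hcpos)]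

noncomputable def aTerm (j : ℤ) : ℂ := (-1:ℂ)^j * (2:ℂ)^(-(j*(j-1)/2))

lemma neg_one_zpow_neg (j : ℤ) : (-1:ℂ)^(-j) = (-1:ℂ)^j := by
  rw [zpow_neg]
  have h : ((-1:ℂ)^j) * ((-1:ℂ)^j) = 1 := by rw [← mul_zpow]; norm_num
  exact inv_eq_of_mul_eq_one_right h

lemma aTerm_invol (j : ℤ) : aTerm (1 - j) = -aTerm j := by
  unfold aTerm
  have e1 : (2:ℂ)^(-((1-j)*((1-j)-1)/2)) = (2:ℂ)^(-(j*(j-1)/2)) := by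
    congr 2
    rw [show (1-j)*((1-j)-1) = j*(j-1) by ring]
  have e2 : (-1:ℂ)^(1-j) = -(-1:ℂ)^j := by
    rw [sub_eq_add_neg, zpow_add₀ (neg_ne_zero.mpr (one_ne_zero)), neg_one_zpow_neg]
    norm_num
  rw [e1, e2]; ring

lemma tsum_aTerm_zero : ∑' j : ℤ, aTerm j = 0 := by
  have h1 : ∑' j : ℤ, aTerm ((Equiv.subLeft (1:ℤ)) j) = ∑' j : ℤ, aTerm j :=
    (Equiv.subLeft (1:ℤ)).tsum_eq aTerm
  simp only [Equiv.subLeft_apply] at h1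
  have h2 : ∑' j : ℤ, aTerm (1 - j) = -∑' j : ℤ, aTerm j := by
    rw [← tsum_neg]
    congr 1; funext j; rw [aTerm_invol]
  have h3 : ∑' j : ℤ, aTerm j = -∑' j : ℤ, aTerm j := h1.symm.trans h2
  linear_combination h3 / 2

lemma norm_aTerm (j : ℤ) : ‖aTerm j‖ = (2:ℝ)^(-(j*(j-1)/2)) := by
  unfold aTerm
  rw [norm_mul, norm_zpow, norm_zpow]
  norm_num

lemma summable_aTerm : Summable aTerm := by
  apply Summable.of_nat_of_neg
  · apply Summable.of_norm_bounded_eventually_nat (g := fun n => 2 * (1/2:ℝ)^n) hg_summable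
    filter_upwards [Filter.eventually_ge_atTop 2] with n hn2
    rw [norm_aTerm]
    set e : ℤ := (n:ℤ) * ((n:ℤ) - 1) / 2 with he
    have h2e : 2 * e = (n:ℤ) * ((n:ℤ) - 1) := two_mul_ediv' _
    have hn2' : (2:ℤ) ≤ (n:ℤ) := by exact_mod_cast hn2
    have hprod : (0:ℤ) ≤ ((n:ℤ)-1) * ((n:ℤ)-2) := mul_nonneg (by linarith) (by linarith)
    have hne : (n:ℤ) - 1 ≤ e := by nlinarith [h2e, hprod]
    calc (2:ℝ)^(-e) ≤ (2:ℝ)^(-(n:ℤ)+1) := zpow_le_zpow_right₀ one_le_two (by linarith)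
      _ = 2 * (1/2:ℝ)^n := by rw [zpow_add₀ two_ne_zero, hpow_eq, zpow_one]; ring
  · apply Summable.of_norm_bounded_eventually_nat (g := fun n => 2 * (1/2:ℝ)^n) hg_summable
    filter_upwards [Filter.eventually_ge_atTop 1] with n hn1
    rw [norm_aTerm]
    set e : ℤ := (-(n:ℤ)) * ((-(n:ℤ)) - 1) / 2 with he
    have h2e : 2 * e = (-(n:ℤ)) * ((-(n:ℤ)) - 1) := two_mul_ediv' _
    have hn1' : (1:ℤ) ≤ (n:ℤ) := by exact_mod_cast hn1
    have hprod : (0:ℤ) ≤ (n:ℤ) * ((n:ℤ)-1) := mul_nonneg (by linarith) (by linarith)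
    have hne : (n:ℤ) ≤ e := by nlinarith [h2e, hprod]
    have hppos : (0:ℝ) ≤ (1/2:ℝ)^n := by positivity
    calc (2:ℝ)^(-e) ≤ (2:ℝ)^(-(n:ℤ)) := zpow_le_zpow_right₀ one_le_two (by linarith)
      _ = (1/2:ℝ)^n := hpow_eq n
      _ ≤ 2 * (1/2:ℝ)^n := by linarith

/-- The sum defining `𝒫(z)` converges away from `0` and `-2^j` (`j ∈ ℤ`), and `𝒫` satisfies
the functional equation `𝒫(z) = z ⬝ 𝒫(2z)`. -/
theorem stmt_14 (z : ℂ) (hz : z ≠ 0) (hz' : ∀ j : ℤ, z ≠ -(2 : ℂ) ^ j) :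
    Summable (fun j : ℤ => pTerm z j) ∧
    (∑' j : ℤ, pTerm z j) = z * ∑' j : ℤ, pTerm (2 * z) j := by
  have hden : ∀ j : ℤ, (2:ℂ)^j * z + 1 ≠ 0 := by
    intro j h
    apply hz' (-j)
    have h2 : (2:ℂ)^j ≠ 0 := zpow_ne_zero _ two_ne_zero
    rw [zpow_neg]
    field_simp
    linear_combination h
  have hs1 := summable_pTerm z hz
  have hs2 := summable_pTerm (2*z) (mul_ne_zero two_ne_zero hz)
  refine ⟨hs1, ?_⟩
  have key : ∀ j : ℤ, z * pTerm (2*z) (j - 1) = pTerm z j - z * aTerm j := by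
    intro j
    have hd := hden j
    have ht : (2:ℂ)^j ≠ 0 := zpow_ne_zero _ two_ne_zero
    unfold pTerm aTerm
    have e1 : (2:ℂ)^(-((j-1)*((j-1)+1)/2)) = (2:ℂ)^j * (2:ℂ)^(-(j*(j+1)/2)) := by
      rw [← zpow_add₀ (two_ne_zero (α := ℂ))]
      congr 1
      have h1 := two_mul_ediv (j-1)
      have h2 := two_mul_ediv j
      have h3 : (j-1) * ((j-1)+1) = j * (j+1) - 2*j := by ring
      linarith
    have e2 : (2:ℂ)^(-(j*(j-1)/2)) = (2:ℂ)^j * (2:ℂ)^(-(j*(j+1)/2)) := by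
      rw [← zpow_add₀ (two_ne_zero (α := ℂ))]
      congr 1
      have h1 := two_mul_ediv' j
      have h2 := two_mul_ediv j
      have h3 : j * (j-1) = j * (j+1) - 2*j := by ring
      linarith
    have e3 : (-1:ℂ)^(j-1) = -(-1:ℂ)^j := by
      rw [zpow_sub₀ (neg_ne_zero.mpr (one_ne_zero (α := ℂ)))]
      field_simp
    have e4 : (2:ℂ)^(j-1) = (2:ℂ)^j / 2 := by
      rw [zpow_sub₀ (two_ne_zero (α := ℂ)), zpow_one]
    rw [e1, e2, e3, e4]
    rw [show (2:ℂ)^j / 2 * (2*z) = (2:ℂ)^j * z by ring]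
    set s := (-1:ℂ)^j with hs
    set t := (2:ℂ)^j with htt
    set c := (2:ℂ)^(-(j*(j+1)/2)) with hcc
    have hd' : z * t + 1 ≠ 0 := by rw [mul_comm]; exact hd
    field_simp
    ring
  have hsa : Summable (fun j : ℤ => z * aTerm j) := summable_aTerm.mul_left z
  have hs2' : Summable (fun j : ℤ => z * pTerm (2*z) (j - 1)) := by
    have := (Equiv.subRight (1:ℤ)).summable_iff.mpr (hs2.mul_left z)
    simpa [Function.comp_def] using this
  calc ∑' j : ℤ, pTerm z j
      = ∑' j : ℤ, (z * pTerm (2*z) (j-1) + z * aTerm j) := by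
        congr 1; funext j; rw [key j]; ring
    _ = (∑' j : ℤ, z * pTerm (2*z) (j-1)) + ∑' j : ℤ, z * aTerm j :=
        Summable.tsum_add hs2' hsa
    _ = (∑' j : ℤ, z * pTerm (2*z) j) + z * ∑' j : ℤ, aTerm j := by
        have hre := (Equiv.subRight (1:ℤ)).tsum_eq (fun j => z * pTerm (2*z) j)
        simp only [Equiv.subRight_apply] at hre
        rw [hre, tsum_mul_left, tsum_mul_left]
    _ = z * ∑' j : ℤ, pTerm (2 * z) j := by
        rw [tsum_aTerm_zero, mul_zero, add_zero, tsum_mul_left]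
end

section
/- Let H be a connected graph with n ≥ 2 vertices, v a vertex of H such that all vertices are within distance d of v where d ≥ 2 is an integer. Then there exists a vertex w of H and an integer 0 ≤ i ≤ d-1 such that w is at distance i from v and w has at least ⌈n^{1/d} - 1⌉ neighbors at distance i+1 from v. -/
open Finset

private lemma nbr_aux {V : Type*} (H : SimpleGraph V) (hconn : H.Connected)
    (v u : V) (i : ℕ) (h : H.dist v u = i + 1) :
    ∃ w, H.Adj w u ∧ H.dist v w = i := by
  obtain ⟨p, hp⟩ := hconn.exists_walk_length_eq_dist v u
  have hrl : p.reverse.length = i + 1 := by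
    rw [SimpleGraph.Walk.length_reverse, hp, h]
  cases hq : p.reverse with
  | nil => rw [hq] at hrl; simp at hrl
  | cons ha q =>
    rename_i w
    rw [hq] at hrl
    simp only [SimpleGraph.Walk.length_cons, Nat.add_right_cancel_iff] at hrl
    refine ⟨w, ha.symm, le_antisymm ?_ ?_⟩
    · calc H.dist v w ≤ q.reverse.length := SimpleGraph.dist_le _
        _ = i := by rw [SimpleGraph.Walk.length_reverse, hrl]
    · have ht : H.dist v u ≤ H.dist v w + H.dist w u := hconn.dist_triangle
      have h1 : H.dist w u ≤ 1 := by
        rw [SimpleGraph.dist_eq_one_iff_adj.mpr ha.symm]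
      omega

/-- In a connected graph on `n ≥ 2` vertices in which every vertex is within distance
`d ≥ 2` of `v`, there is a vertex `w` at some distance `i ≤ d - 1` from `v` having at
least `⌈n^{1/d} - 1⌉` neighbors at distance `i + 1` from `v`. -/
theorem stmt_18 {V : Type*} [Fintype V] [DecidableEq V] (H : SimpleGraph V)
    [DecidableRel H.Adj] (hconn : H.Connected) (hn : 2 ≤ Fintype.card V)
    (v : V) (d : ℕ) (hd : 2 ≤ d) (hdist : ∀ u, H.dist v u ≤ d) :
    ∃ (w : V) (i : ℕ), i ≤ d - 1 ∧ H.dist v w = i ∧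
      ⌈((Fintype.card V : ℝ)) ^ ((1 : ℝ) / d) - 1⌉₊ ≤
        (Finset.univ.filter (fun u => H.Adj w u ∧ H.dist v u = i + 1)).card := by
  classical
  set n := Fintype.card V with hncard
  set r : ℝ := (n : ℝ) ^ ((1:ℝ)/d) with hr
  have hd0 : (d : ℝ) ≠ 0 := by positivity
  have hnR : (1:ℝ) < n := by exact_mod_cast (show 1 < n by omega)
  have h1r : (1:ℝ) < r := by
    rw [hr]
    exact (Real.one_lt_rpow_iff_of_pos (by linarith)).mpr (Or.inl ⟨hnR, by positivity⟩)
  set f : ℕ → ℕ := fun i => (univ.filter (fun u => H.dist v u ≤ i)).card with hf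
  have hfd : f d = n := by
    rw [hf, hncard]
    simp only
    rw [filter_true_of_mem (fun u _ => hdist u), card_univ]
  have hf0 : f 0 = 1 := by
    rw [hf]
    simp only
    have : (univ.filter (fun u => H.dist v u ≤ 0)) = {v} := by
      ext u
      simp only [mem_filter, mem_univ, true_and, mem_singleton, Nat.le_zero]
      rw [hconn.dist_eq_zero_iff]
      exact eq_comm
    rw [this, card_singleton]
  have hfmono : Monotone f := fun a b hab => by
    apply card_le_card
    intro u hu
    simp only [mem_filter] at hu ⊢
    exact ⟨hu.1, hu.2.trans hab⟩
  have hfpos : ∀ i, 1 ≤ f i := fun i => hf0 ▸ hfmono (Nat.zero_le i)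
  -- find the good level i
  have hstep : ∃ i < d, r * f i ≤ f (i+1) := by
    by_contra hcon
    push_neg at hcon
    have key : ∀ k, 1 ≤ k → k ≤ d → (f k : ℝ) < r ^ k := by
      intro k
      induction k with
      | zero => omega
      | succ m ih =>
        intro _ hkd
        have hm : (f (m+1) : ℝ) < r * f m := hcon m (by omega)
        rcases Nat.eq_zero_or_pos m with hm0 | hm0
        · subst hm0
          rw [hf0] at hm
          simpa using hm
        · have := ih hm0 (by omega)
          calc (f (m+1) : ℝ) < r * f m := hm
            _ < r * r ^ m := by
                apply mul_lt_mul_of_pos_left this (by linarith)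
            _ = r ^ (m+1) := by ring
    have hlt : (f d : ℝ) < r ^ d := key d (by omega) le_rfl
    have hrd : r ^ d = (n : ℝ) := by
      rw [hr, ← Real.rpow_natCast ((n:ℝ) ^ ((1:ℝ)/d)) d, ← Real.rpow_mul (by positivity)]
      rw [one_div_mul_cancel hd0, Real.rpow_one]
    rw [hfd, hrd] at hlt
    exact lt_irrefl _ hlt
  obtain ⟨i, hid, hri⟩ := hstep
  set S : ℕ → Finset V := fun j => univ.filter (fun u => H.dist v u = j) with hS
  have hsplit : f (i+1) = f i + (S (i+1)).card := by
    rw [hf, hS]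
    simp only
    rw [← card_union_of_disjoint]
    · congr 1
      ext u
      simp only [mem_filter, mem_union, mem_univ, true_and]
      omega
    · rw [disjoint_left]
      intro u hu1 hu2
      simp only [mem_filter, mem_univ, true_and] at hu1 hu2
      omega
  have hScard : ((S (i+1)).card : ℝ) ≥ (r - 1) * f i := by
    have h1 : (f (i+1) : ℝ) = f i + (S (i+1)).card := by rw [hsplit]; push_cast; ring
    nlinarith [hri]
  have hSne : (S (i+1)).Nonempty := by
    rw [← card_pos]
    by_contra hc
    push_neg at hc
    rw [Nat.le_zero] at hc
    rw [hc] at hScard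
    norm_num at hScard
    have : (1: ℝ) ≤ f i := by exact_mod_cast hfpos i
    nlinarith
  -- the assignment of each vertex at distance i+1 to a neighbor at distance i
  have hnb : ∀ u, H.dist v u = i + 1 → ∃ w, H.Adj w u ∧ H.dist v w = i :=
    fun u hu => nbr_aux H hconn v u i hu
  set g : V → V := fun u => if h : H.dist v u = i + 1 then Classical.choose (hnb u h) else v
    with hg
  have hgspec : ∀ u (h : H.dist v u = i + 1),
      H.Adj (g u) u ∧ H.dist v (g u) = i := by
    intro u h
    rw [hg]
    simp only [dif_pos h]
    exact Classical.choose_spec (hnb u h)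
  have hmaps : ∀ u ∈ S (i+1), g u ∈ S i := by
    intro u hu
    simp only [hS, mem_filter, mem_univ, true_and] at hu ⊢
    exact (hgspec u hu).2
  have hsum : ∑ w ∈ S i, ((S (i+1)).filter (fun u => g u = w)).card = (S (i+1)).card :=
    (Finset.card_eq_sum_card_fiberwise hmaps).symm
  have hSine : (S i).Nonempty := by
    obtain ⟨u, hu⟩ := hSne
    exact ⟨g u, hmaps u hu⟩
  have hexw : ∃ w ∈ S i, (S (i+1)).card ≤ (S i).card * ((S (i+1)).filter (fun u => g u = w)).card := by
    by_contra hc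
    push_neg at hc
    have hlt : ∑ w ∈ S i, (S i).card * ((S (i+1)).filter (fun u => g u = w)).card <
        ∑ w ∈ S i, (S (i+1)).card :=
      Finset.sum_lt_sum_of_nonempty hSine hc
    rw [← Finset.mul_sum, hsum, Finset.sum_const, smul_eq_mul] at hlt
    exact lt_irrefl _ hlt
  obtain ⟨w, hwS, hwcard⟩ := hexw
  have hwdist : H.dist v w = i := by
    simp only [hS, mem_filter, mem_univ, true_and] at hwS
    exact hwS
  refine ⟨w, i, by omega, hwdist, ?_⟩
  -- the fiber is contained in the target filter
  have hsub : (S (i+1)).filter (fun u => g u = w) ⊆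
      univ.filter (fun u => H.Adj w u ∧ H.dist v u = i + 1) := by
    intro u hu
    simp only [hS, mem_filter, mem_univ, true_and] at hu ⊢
    obtain ⟨hu1, hu2⟩ := hu
    have := (hgspec u hu1).1
    rw [hu2] at this
    exact ⟨this, hu1⟩
  refine le_trans ?_ (card_le_card hsub)
  -- show ⌈r - 1⌉₊ ≤ fiber card
  rw [Nat.ceil_le]
  set m := ((S (i+1)).filter (fun u => g u = w)).card
  have hSile : ((S i).card : ℝ) ≤ f i := by
    exact_mod_cast card_le_card (fun u hu => by
      simp only [hS, mem_filter, mem_univ, true_and] at hu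
      simp only [hf, mem_filter, mem_univ, true_and]
      omega)
  have hSipos : (0:ℝ) < (S i).card := by exact_mod_cast card_pos.mpr hSine
  have hchain : ((S i).card : ℝ) * (r - 1) ≤ (S i).card * m := by
    calc ((S i).card : ℝ) * (r - 1) = (r - 1) * (S i).card := by ring
      _ ≤ (r - 1) * f i := by
          apply mul_le_mul_of_nonneg_left hSile (by linarith)
      _ ≤ (S (i+1)).card := hScard
      _ ≤ (S i).card * m := by exact_mod_cast hwcard
  have := le_of_mul_le_mul_left (by linarith [hchain] : ((S i).card:ℝ) * (r-1) ≤ (S i).card * m) hSipos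
  linarith [this]
end

section
/- There exists n₁ ≥ 1 such that for every graph H with n ≥ n₁ vertices, if each vertex independently receives a geometrically distributed number of pebbles with parameter p = (1 + √((log 2)/n))^{-1}, then the probability that no vertex has two or more pebbles while some vertex has no pebble exceeds 1/2. (This event implies the distribution is unsolvable, so the geometric pebbling threshold of H is at least √(n·log 2).) -/
set_option maxHeartbeats 1600000 in
/-- For all sufficiently large `n`, if each of the `n` vertices of a graph independently
receives a geometric number of pebbles with parameter `p = (1 + √((log 2)/n))⁻¹`, then
with probability more than `1/2` no vertex has two or more pebbles while some vertex has
no pebble; this probability is `(1-(1-p)²)ⁿ - (p(1-p))ⁿ`. -/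
theorem stmt_19 :
    ∃ n₁ : ℕ, 1 ≤ n₁ ∧ ∀ n : ℕ, n₁ ≤ n →
      (1 - (1 - (1 + Real.sqrt (Real.log 2 / n))⁻¹) ^ 2) ^ n -
          ((1 + Real.sqrt (Real.log 2 / n))⁻¹ * (1 - (1 + Real.sqrt (Real.log 2 / n))⁻¹)) ^ n
        > 1 / 2 := by
  refine ⟨16, by norm_num, fun n hn => ?_⟩
  have hn16 : (16:ℝ) ≤ n := by exact_mod_cast hn
  have hn0 : (0:ℝ) < n := by linarith
  have hlog2 : (0:ℝ) < Real.log 2 := Real.log_pos (by norm_num)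
  have hlog2lt : Real.log 2 < 1 := by
    have := Real.log_two_lt_d9; linarith
  have hlog2gt : (1:ℝ)/2 < Real.log 2 := by
    have := Real.log_two_gt_d9; linarith
  set s : ℝ := Real.sqrt (Real.log 2 / n) with hs_def
  have hs0 : 0 < s := Real.sqrt_pos.mpr (by positivity)
  have hs_sq : s ^ 2 = Real.log 2 / n := Real.sq_sqrt (by positivity)
  have hs1 : s ≤ 1 := by
    rw [hs_def, show (1:ℝ) = Real.sqrt 1 by simp]
    apply Real.sqrt_le_sqrt
    rw [div_le_one hn0]; linarith
  have h1s : (0:ℝ) < 1 + s := by linarith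
  have h12s : (0:ℝ) < 1 + 2*s := by linarith
  -- rewrite the two bases
  have e1 : 1 - (1 - (1+s)⁻¹) ^ 2 = (1 + 2*s)/(1+s)^2 := by
    field_simp; ring
  have e2 : (1+s)⁻¹ * (1 - (1+s)⁻¹) = s/(1+s)^2 := by
    field_simp
    ring
  rw [e1, e2]
  -- the second term is at most (1/4)^n ≤ 1/n^2
  have hB : s/(1+s)^2 ≤ 1/4 := by
    rw [div_le_div_iff₀ (by positivity) (by norm_num)]
    nlinarith [sq_nonneg (1 - s)]
  have hBn : (s/(1+s)^2) ^ n ≤ (1/4:ℝ) ^ n :=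
    pow_le_pow_left₀ (by positivity) hB n
  have h4n : (n:ℝ)^2 ≤ 4 ^ n := by
    have h2 : (n:ℝ) ≤ 2 ^ n := by
      exact_mod_cast (Nat.lt_two_pow_self (n := n)).le
    calc (n:ℝ)^2 ≤ (2^n)^2 := by
          apply pow_le_pow_left₀ (by positivity) h2
      _ = 4 ^ n := by rw [← pow_mul, show (4:ℝ) = 2^2 by norm_num, ← pow_mul]; ring_nf
  have hBn2 : (s/(1+s)^2) ^ n ≤ 1/(n:ℝ)^2 := by
    refine hBn.trans ?_
    rw [div_pow, one_pow, div_le_div_iff₀ (by positivity) (by positivity)]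
    nlinarith [h4n]
  -- the first term is at least 1/2 + s * log 2 / (1 + 2s)
  set x : ℝ := s^2/(1+2*s) with hx_def
  have hx0 : 0 < x := by positivity
  have hbase : (1 + 2*s)/(1+s)^2 = (1+x)⁻¹ := by
    rw [hx_def]; field_simp
    try ring
    try tauto
  have hexp1 : Real.exp (-x) ≤ (1+x)⁻¹ := by
    rw [Real.exp_neg]
    apply inv_anti₀ (by positivity)
    linarith [Real.add_one_le_exp x]
  have hA1 : Real.exp (-(n*x)) ≤ ((1+x)⁻¹) ^ n := by
    calc Real.exp (-(n*x)) = (Real.exp (-x)) ^ n := by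
          rw [← Real.exp_nat_mul]; ring_nf
      _ ≤ ((1+x)⁻¹) ^ n := pow_le_pow_left₀ (Real.exp_pos _).le hexp1 n
  have hnx : (n:ℝ) * x = Real.log 2 / (1 + 2*s) := by
    rw [hx_def, hs_sq]
    field_simp
  set t : ℝ := 2 * s * Real.log 2 / (1 + 2*s) with ht_def
  have ht0 : 0 < t := by positivity
  have hsplit : -((n:ℝ)*x) = -Real.log 2 + t := by
    rw [hnx, ht_def]; field_simp; ring
  have hA2 : (1:ℝ)/2 * (1 + t) ≤ Real.exp (-(n*x)) := by
    rw [hsplit, Real.exp_add, Real.exp_neg, Real.exp_log (by norm_num : (0:ℝ) < 2)]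
    have := Real.add_one_le_exp t
    nlinarith [Real.exp_pos t]
  have hA : 1/2 + s * Real.log 2 / (1 + 2*s) ≤ ((1 + 2*s)/(1+s)^2) ^ n := by
    rw [hbase]
    refine le_trans (le_of_eq ?_) (hA2.trans hA1)
    rw [ht_def]; ring
  -- final comparison: 1/n^2 < s * log 2 / (1+2s)
  have hfin : 1/(n:ℝ)^2 < s * Real.log 2 / (1 + 2*s) := by
    set v : ℝ := Real.sqrt (2*(n:ℝ)) with hv
    have hv0 : 0 < v := Real.sqrt_pos.mpr (by positivity)
    have hsv : 1 ≤ s * v := by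
      rw [hs_def, hv, ← Real.sqrt_mul (by positivity)]
      rw [show Real.log 2 / (n:ℝ) * (2*(n:ℝ)) = 2 * Real.log 2 by field_simp]
      rw [show (1:ℝ) = Real.sqrt 1 by simp]
      apply Real.sqrt_le_sqrt; linarith
    have hs_low : 1/v ≤ s := by rw [div_le_iff₀ hv0]; linarith
    have hv_lt : v < (n:ℝ)^2/13 := by
      have h256 : (256:ℝ) ≤ (n:ℝ)*(n:ℝ) := by
        have := mul_le_mul hn16 hn16 (by norm_num) hn0.le
        linarith
      have hb : 256*((n:ℝ)*(n:ℝ)) ≤ ((n:ℝ)*(n:ℝ))*((n:ℝ)*(n:ℝ)) :=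
        mul_le_mul_of_nonneg_right h256 (mul_self_nonneg _)
      have he : 16*(n:ℝ) ≤ (n:ℝ)*(n:ℝ) :=
        mul_le_mul_of_nonneg_right hn16 hn0.le
      have h2 : 2*(n:ℝ) < ((n:ℝ)^2/13)^2 := by nlinarith [hb, he, hn16]
      rw [hv]
      exact (Real.sqrt_lt' (by positivity)).mpr h2
    have h13 : 13/(n:ℝ)^2 < 1/v := by
      rw [div_lt_div_iff₀ (by positivity) hv0]
      nlinarith [hv_lt]

    have h12s_le : 1 + 2*s ≤ 3 := by linarith
    have hAle : 1/v * (1/2) ≤ s * Real.log 2 :=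
      mul_le_mul hs_low hlog2gt.le (by norm_num) hs0.le
    have hgoal1 : 1/(n:ℝ)^2 < (1/v) * (1/2) / 3 := by
      have a : 13 * ((n:ℝ)^2)⁻¹ < v⁻¹ := by
        rw [div_eq_mul_inv, one_div] at h13; exact h13
      have b : (0:ℝ) < ((n:ℝ)^2)⁻¹ := by positivity
      have c : ((n:ℝ)^2)⁻¹ < v⁻¹/6 := by linarith
      rw [one_div, one_div]; linarith
    refine hgoal1.trans_le ?_
    rw [div_le_div_iff₀ (by norm_num) h12s]
    have h2 : (1/v)*(1/2)*(1+2*s) ≤ (s*Real.log 2)*(1+2*s) :=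
      mul_le_mul_of_nonneg_right hAle h12s.le
    have h3 : (s*Real.log 2)*(1+2*s) ≤ (s*Real.log 2)*3 :=
      mul_le_mul_of_nonneg_left h12s_le (mul_pos hs0 hlog2).le
    linarith
  have hBn3 := hBn2.trans_lt hfin
  linarith
end
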